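/- arXiv:2302.04444 — 4 statements merged into one kernel-verified Lean document; each statement's English description precedes it below -/
import Mathlib

section
/- Let Γ be a weighted graph, σ ∈ Aut(Γ), v a vertex of C_Γ, and let α ∈ A_Γ be an automorphism with α(v) = v and constant local action σ(α,w) = σ for all vertices w. Then α fixes pointwise the set of all vertices w of C_Γ such that there is a path in C_Γ connecting w to v all of whose edge labels are fixed points of σ. -/
/-!
Setup for Cayley graphs of Coxeter groups.

A weighted graph `Γ = (VΓ, EΓ, m)` in the sense of the paper is encoded by a Mathlib
`CoxeterMatrix B` (`B = VΓ`): the weight `m x y` is `M x y`, where the entry `0` encodes `∞`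
(no relation / no edge).  The associated Coxeter group is `M.Group`, with standard generators
`M.simple x`.
-/

open CoxeterMatrix

variable {B : Type*}

/-- The automorphism group of a simple graph, as a subgroup of the permutation group
of its vertex set. -/
def graphAut {V : Type*} (G : SimpleGraph V) : Subgroup (Equiv.Perm V) where
  carrier := {σ | ∀ x y : V, G.Adj (σ x) (σ y) ↔ G.Adj x y}
  one_mem' := by intro x y; simp
  mul_mem' := by
    intro a b ha hb x y
    simpa [Equiv.Perm.mul_apply] using (ha (b x) (b y)).trans (hb x y)
  inv_mem' := by
    intro a ha x y
    simpa using (ha (a⁻¹ x) (a⁻¹ y)).symm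

/-- The group `Aut(Γ)` of weight-preserving automorphisms of the weighted graph encoded by the
Coxeter matrix `M`, as a subgroup of the permutation group of the vertex set. -/
def wAut (M : CoxeterMatrix B) : Subgroup (Equiv.Perm B) where
  carrier := {σ | ∀ x y : B, M (σ x) (σ y) = M x y}
  one_mem' := by intro x y; simp
  mul_mem' := by
    intro a b ha hb x y
    simpa [Equiv.Perm.mul_apply] using (ha (b x) (b y)).trans (hb x y)
  inv_mem' := by
    intro a ha x y
    simpa using (ha (a⁻¹ x) (a⁻¹ y)).symm

/-- The simplicial graph underlying a weighted graph (Coxeter matrix): distinct vertices `x, y`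
are adjacent iff the weight `M x y` is finite (recall that the entry `0` encodes `∞`). -/
def cGraph (M : CoxeterMatrix B) : SimpleGraph B where
  Adj x y := x ≠ y ∧ M x y ≠ 0
  symm := ⟨by
    rintro x y ⟨h1, h2⟩
    exact ⟨h1.symm, by rwa [M.symmetric y x]⟩⟩
  loopless := ⟨fun x h => h.1 rfl⟩

/-- The star of a vertex `x`: the vertex together with all its neighbours. -/
def starSet (M : CoxeterMatrix B) (x : B) : Set B := insert x ((cGraph M).neighborSet x)

/-- The Cayley graph `C_Γ` of the Coxeter group `W_Γ = M.Group` with respect to the standard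
generating set: `v` and `w` are adjacent iff `w = v * (M.simple x)` for some generator `x`
(the edge `{v, v * M.simple x}` is labelled by `x`). -/
def cayley (M : CoxeterMatrix B) : SimpleGraph M.Group where
  Adj v w := v ≠ w ∧ ∃ x : B, w = v * M.simple x
  symm := ⟨by
    rintro v w ⟨hne, x, rfl⟩
    refine ⟨hne.symm, x, ?_⟩
    have h : M.simple x * M.simple x = 1 := M.toCoxeterSystem.simple_mul_simple_self x
    rw [mul_assoc, h, mul_one]⟩
  loopless := ⟨fun v h => h.1 rfl⟩

/-- `τ : VΓ → VΓ` is the local action `σ(α, v)` of the (Cayley graph automorphism) `α` at the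
vertex `v`: for each generator `x`, `α` maps the edge `{v, v·x}` (labelled `x`) to the edge
`{α v, (α v)·(τ x)}` (labelled `τ x`). -/
def IsLocalAction (M : CoxeterMatrix B) (α : Equiv.Perm M.Group) (v : M.Group)
    (τ : B → B) : Prop :=
  ∀ x : B, α (v * M.simple x) = α v * M.simple (τ x)

/-- `Γ₁` is a factor associated with the separating set `S ⊊ VΓ`: the induced subgraph on
`VΓ ∖ S` is disconnected, and `Γ₁` is the union of `S` with a nonempty collection `C` of
connected components of `VΓ ∖ S` which omits at least one component (so `C` is a nonempty
union of components, closed under reachability, with nonempty complement in `VΓ ∖ S`). -/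
def IsFactor (M : CoxeterMatrix B) (S : Set B) (Γ₁ : Set B) : Prop :=
  S ≠ Set.univ ∧ ¬ ((cGraph M).induce Sᶜ).Connected ∧
  ∃ C : Set B, Γ₁ = S ∪ C ∧ C ⊆ Sᶜ ∧ C.Nonempty ∧ (Sᶜ \ C).Nonempty ∧
    (∀ x y : ↥(Sᶜ), ((cGraph M).induce Sᶜ).Reachable x y → (x : B) ∈ C → (y : B) ∈ C)

/-- `S` is a good separating set: some factor `Γ₁` associated with `S` carries a nontrivial
weight-preserving automorphism restricting to the identity on `S`. -/
def IsGoodSepSet (M : CoxeterMatrix B) (S : Set B) : Prop :=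
  ∃ Γ₁ : Set B, IsFactor M S Γ₁ ∧
    ∃ σ : Equiv.Perm ↥Γ₁, σ ≠ 1 ∧ (∀ a b : ↥Γ₁, M ((σ a : B)) ((σ b : B)) = M (a : B) (b : B)) ∧
      (∀ a : ↥Γ₁, (a : B) ∈ S → σ a = a)

/-- The permutation topology on a group of permutations of `V` (e.g. the automorphism group of a
graph with vertex set `V`): the topology of pointwise convergence, i.e. the topology induced from
the product topology on `V → V` where each factor carries the discrete topology.  Its basic open
neighbourhoods of the identity are the pointwise stabilisers of finite subsets of `V`. -/
def permTop {V : Type*} (H : Subgroup (Equiv.Perm V)) : TopologicalSpace ↥H :=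
  TopologicalSpace.induced (fun α => ((α : Equiv.Perm V) : V → V))
    (@Pi.topologicalSpace V (fun _ => V) (fun _ => ⊥))

open Classical in
/-- The weighted graph (Coxeter matrix) of a right-angled weighted graph: all edges of the
simplicial graph `G` get weight `2`. -/
noncomputable def ofGraph {V : Type*} (G : SimpleGraph V) : CoxeterMatrix V where
  M := Matrix.of fun x y => if x = y then 1 else if G.Adj x y then 2 else 0
  isSymm := by
    ext x y
    by_cases h : x = y
    · simp [Matrix.IsSymm, h]
    · simp only [Matrix.transpose_apply, Matrix.of_apply, if_neg h, if_neg (Ne.symm h)]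
      rw [G.adj_comm]
  diagonal i := by simp
  off_diagonal i j h := by
    simp only [Matrix.of_apply, if_neg h]
    split_ifs <;> simp
-- STATEMENT 6
theorem fixes_vertices_connected_by_fixed_labels {B : Type*} (M : CoxeterMatrix B)
    (σ : Equiv.Perm B) (hσ : σ ∈ wAut M) (v : M.Group) (α : Equiv.Perm M.Group)
    (hα : α ∈ graphAut (cayley M)) (hfix : α v = v)
    (hloc : ∀ w : M.Group, IsLocalAction M α w σ) (w : M.Group)
    (hw : Relation.ReflTransGen (fun a b : M.Group => ∃ x : B, σ x = x ∧ b = a * M.simple x) v w) :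
    α w = w := by
  induction hw with
  | refl => exact hfix
  | tail _ h ih =>
    obtain ⟨x, hx, rfl⟩ := h
    rw [hloc _ x, ih, hx]
end

section
/- Let Γ be a finite weighted simplicial graph. The following are equivalent: (1) there exist a vertex x ∈ VΓ and a nontrivial α ∈ Aut(Γ) such that α restricts to the identity on star(x); (2) Γ admits a good separating set; (3) there exist a separating set S ⊊ VΓ with corresponding factor Γ_1 and two distinct automorphisms α, β ∈ Aut(Γ_1) such that α and β agree on S. -/
/-!
Setup for Cayley graphs of Coxeter groups.

A weighted graph `Γ = (VΓ, EΓ, m)` in the sense of the paper is encoded by a Mathlib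
`CoxeterMatrix B` (`B = VΓ`): the weight `m x y` is `M x y`, where the entry `0` encodes `∞`
(no relation / no edge).  The associated Coxeter group is `M.Group`, with standard generators
`M.simple x`.
-/

open CoxeterMatrix

variable {B : Type*}

private lemma reach_of_isolated {V : Type*} {G : SimpleGraph V} {x y : V}
    (h : ∀ z, ¬ G.Adj x z) (hr : G.Reachable x y) : x = y := by
  obtain ⟨w⟩ := hr
  cases w with
  | nil => rfl
  | cons h' _ => exact absurd h' (h _)

-- STATEMENT 8
theorem good_sep_set_characterisation {B : Type*} [Finite B] (M : CoxeterMatrix B) :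
    ((∃ (x : B) (σ : Equiv.Perm B), (∀ a b : B, M (σ a) (σ b) = M a b) ∧ σ ≠ 1 ∧
        ∀ y ∈ starSet M x, σ y = y) ↔ (∃ S : Set B, IsGoodSepSet M S)) ∧
    ((∃ S : Set B, IsGoodSepSet M S) ↔
      ∃ (S Γ₁ : Set B), IsFactor M S Γ₁ ∧
        ∃ σ τ : Equiv.Perm ↥Γ₁, (∀ a b : ↥Γ₁, M ((σ a : B)) ((σ b : B)) = M (a : B) (b : B)) ∧
          (∀ a b : ↥Γ₁, M ((τ a : B)) ((τ b : B)) = M (a : B) (b : B)) ∧ σ ≠ τ ∧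
          ∀ a : ↥Γ₁, (a : B) ∈ S → σ a = τ a) := by
  classical
  constructor
  · -- (1) ↔ (2)
    constructor
    · rintro ⟨x₀, σ, hM, hσ1, hstar⟩
      have hσx₀ : σ x₀ = x₀ := hstar x₀ (Set.mem_insert _ _)
      obtain ⟨u, hu⟩ : ∃ u, σ u ≠ u := by
        by_contra h
        push_neg at h
        exact hσ1 (Equiv.ext h)
      have hux₀ : u ≠ x₀ := fun h => hu (h ▸ hσx₀)
      set S : Set B := {b | σ b = b ∧ b ≠ x₀} with hS
      set C : Set B := {b | σ b ≠ b} with hC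
      -- x₀ is isolated in the induced graph on Sᶜ
      have hiso : ∀ (hx : x₀ ∈ Sᶜ) (z : ↥(Sᶜ)),
          ¬ ((cGraph M).induce Sᶜ).Adj ⟨x₀, hx⟩ z := by
        rintro hx ⟨z, hz⟩ hadj
        have hadj' : (cGraph M).Adj x₀ z := hadj
        have hzstar : z ∈ starSet M x₀ := Set.mem_insert_of_mem _ hadj'
        have hzfix : σ z = z := hstar z hzstar
        have : z ∈ S ∨ ¬ z ∈ S := em _
        have hzS : z ∉ S := hz
        have : z ≠ x₀ := fun h => hadj'.ne (h.symm)
        exact hzS ⟨hzfix, this⟩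
      have hx₀Sc : x₀ ∈ Sᶜ := fun h => h.2 rfl
      have huSc : u ∈ Sᶜ := fun h => hu h.1
      refine ⟨S, {b | b ≠ x₀}, ⟨?_, ?_, C, ?_, ?_, ⟨u, hu⟩, ⟨x₀, hx₀Sc, fun h => h hσx₀⟩, ?_⟩, ?_⟩
      · intro h
        exact hx₀Sc (h ▸ Set.mem_univ x₀)
      · intro hconn
        have hr : ((cGraph M).induce Sᶜ).Reachable ⟨x₀, hx₀Sc⟩ ⟨u, huSc⟩ :=
          hconn.preconnected _ _
        have := reach_of_isolated (hiso hx₀Sc) hr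
        exact hux₀ (congrArg Subtype.val this).symm
      · ext b
        simp only [Set.mem_setOf_eq, Set.mem_union, hS, hC]
        constructor
        · intro hb
          by_cases h : σ b = b
          · exact Or.inl ⟨h, hb⟩
          · exact Or.inr h
        · rintro (⟨_, hb⟩ | hb)
          · exact hb
          · exact fun h => hb (h ▸ hσx₀)
      · intro b hb hbS
        exact hb hbS.1
      · rintro ⟨a, ha⟩ ⟨y, hy⟩ hr haC
        by_contra hyC
        have hyfix : σ y = y := not_not.mp hyC
        have hyx₀ : y = x₀ := by
          by_contra h
          exact hy ⟨hyfix, h⟩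
        subst hyx₀
        have := reach_of_isolated (hiso hy) hr.symm
        exact haC (congrArg Subtype.val this ▸ hσx₀)
      · -- the automorphism of Γ₁ = B \ {x₀}
        have hiff : ∀ b : B, b ∈ {b : B | b ≠ x₀} ↔ σ b ∈ {b : B | b ≠ x₀} := by
          intro b
          simp only [Set.mem_setOf_eq]
          constructor
          · intro hb h
            exact hb (σ.injective (h.trans hσx₀.symm))
          · intro hb h
            exact hb (h ▸ hσx₀)
        refine ⟨σ.subtypePerm (fun b => (hiff b).symm), ?_, ?_, ?_⟩
        · intro h
          have : σ.subtypePerm (fun b => (hiff b).symm) ⟨u, hux₀⟩ = ⟨u, hux₀⟩ := by rw [h]; rfl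
          exact hu (congrArg Subtype.val this)
        · intro a b
          exact hM a b
        · intro a haS
          exact Subtype.ext haS.1
    · rintro ⟨S, Γ₁, ⟨hSu, hdisc, C, hΓ₁, hCS, hCne, hCcne, hclos⟩, σ, hσ1, hM, hσS⟩
      obtain ⟨x₀, hx₀Sc, hx₀C⟩ := hCcne
      have hmem : ∀ b : B, b ∈ Γ₁ ↔ b ∈ S ∨ b ∈ C := by
        intro b; rw [hΓ₁]; exact Set.mem_union b S C
      have hx₀Γ₁ : x₀ ∉ Γ₁ := by
        rw [hmem]
        rintro (h | h)
        · exact hx₀Sc h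
        · exact hx₀C h
      -- separation lemma
      have hsep : ∀ a b : B, a ∈ C → b ∉ S → b ∉ C → M a b = 0 := by
        intro a b haC hbS hbC
        by_contra h
        have hab : a ≠ b := fun he => hbC (he ▸ haC)
        have hadj : (cGraph M).Adj a b := (show a ≠ b ∧ M a b ≠ 0 from ⟨hab, h⟩)
        have haSc : a ∈ Sᶜ := hCS haC
        have hr : ((cGraph M).induce Sᶜ).Reachable ⟨a, haSc⟩ ⟨b, hbS⟩ :=
          SimpleGraph.Adj.reachable hadj
        exact hbC (hclos ⟨a, haSc⟩ ⟨b, hbS⟩ hr haC)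
      -- σ maps C into C
      have hσC : ∀ a : ↥Γ₁, (a : B) ∈ C → ((σ a : B)) ∈ C := by
        intro a haC
        have hin : ((σ a : B)) ∈ S ∨ ((σ a : B)) ∈ C := (hmem _).mp (σ a).2
        rcases hin with h | h
        · exfalso
          have h2 : σ (σ a) = σ a := hσS (σ a) h
          have h3 : σ a = a := σ.injective h2
          have : (a : B) ∈ S := by rw [← h3]; exact h
          exact hCS haC this
        · exact h
      set σE : Equiv.Perm B := σ.extendDomain (Equiv.refl ↥Γ₁) with hσE
      have happ : ∀ (b : B) (hb : b ∈ Γ₁), σE b = ((σ ⟨b, hb⟩ : ↥Γ₁) : B) := by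
        intro b hb
        rw [hσE, Equiv.Perm.extendDomain_apply_subtype _ _ hb]
        rfl
      have hnapp : ∀ b : B, b ∉ Γ₁ → σE b = b := by
        intro b hb
        rw [hσE, Equiv.Perm.extendDomain_apply_not_subtype _ _ hb]
      have hfixS : ∀ b ∈ S, σE b = b := by
        intro b hb
        have hbΓ : b ∈ Γ₁ := (hmem b).mpr (Or.inl hb)
        rw [happ b hbΓ, hσS ⟨b, hbΓ⟩ hb]
      -- weight preservation, mixed case
      have hkey : ∀ a b : B, a ∈ Γ₁ → b ∉ Γ₁ → M (σE a) (σE b) = M a b := by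
        intro a b ha hb
        rw [hnapp b hb]
        have hbS : b ∉ S := fun h => hb ((hmem b).mpr (Or.inl h))
        have hbC : b ∉ C := fun h => hb ((hmem b).mpr (Or.inr h))
        rcases (hmem a).mp ha with haS | haC
        · rw [hfixS a haS]
        · rw [happ a ha]
          rw [hsep a b haC hbS hbC]
          exact hsep _ b (hσC ⟨a, ha⟩ haC) hbS hbC
      refine ⟨x₀, σE, ?_, ?_, ?_⟩
      · intro a b
        by_cases ha : a ∈ Γ₁ <;> by_cases hb : b ∈ Γ₁
        · rw [happ a ha, happ b hb]; exact hM ⟨a, ha⟩ ⟨b, hb⟩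
        · exact hkey a b ha hb
        · rw [M.symmetric, M.symmetric a b]; exact hkey b a hb ha
        · rw [hnapp a ha, hnapp b hb]
      · intro h
        obtain ⟨a, haσ⟩ : ∃ a : ↥Γ₁, σ a ≠ a := by
          by_contra hc
          push_neg at hc
          exact hσ1 (Equiv.ext hc)
        have h1 : σE (a : B) = ((σ a : ↥Γ₁) : B) := happ _ a.2
        rw [h] at h1
        exact haσ (Subtype.ext h1).symm
      · intro y hy
        by_cases hyΓ : y ∈ Γ₁
        · rcases (hmem y).mp hyΓ with hyS | hyC
          · exact hfixS y hyS
          · exfalso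
            rcases hy with rfl | hy
            · exact hx₀C hyC
            · have hadj : (cGraph M).Adj x₀ y := hy
              have : M y x₀ = 0 := hsep y x₀ hyC (fun h => hx₀Sc h) hx₀C
              rw [M.symmetric] at this
              exact (show x₀ ≠ y ∧ M x₀ y ≠ 0 from hadj).2 this
        · exact hnapp y hyΓ
  · -- (2) ↔ (3)
    constructor
    · rintro ⟨S, Γ₁, hfac, σ, hσ1, hM, hσS⟩
      refine ⟨S, Γ₁, hfac, σ, 1, hM, by simp, hσ1, fun a ha => ?_⟩
      rw [hσS a ha, Equiv.Perm.one_apply]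
    · rintro ⟨S, Γ₁, hfac, σ, τ, hMσ, hMτ, hστ, hagree⟩
      refine ⟨S, Γ₁, hfac, τ⁻¹ * σ, ?_, ?_, ?_⟩
      · intro h
        exact hστ (by rwa [mul_eq_one_iff_inv_eq, inv_inv, eq_comm] at h)
      · intro a b
        have h1 := hMτ (τ⁻¹ (σ a)) (τ⁻¹ (σ b))
        rw [Equiv.Perm.coe_inv, Equiv.apply_symm_apply, Equiv.apply_symm_apply] at h1
        calc M (((τ⁻¹ * σ) a : ↥Γ₁) : B) (((τ⁻¹ * σ) b : ↥Γ₁) : B)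
            = M ((τ⁻¹ (σ a) : ↥Γ₁) : B) ((τ⁻¹ (σ b) : ↥Γ₁) : B) := rfl
          _ = M ((σ a : ↥Γ₁) : B) ((σ b : ↥Γ₁) : B) := h1.symm
          _ = M (a : B) (b : B) := hMσ a b
      · intro a ha
        show τ⁻¹ (σ a) = a
        rw [hagree a ha, Equiv.Perm.coe_inv, Equiv.symm_apply_apply]
end

section
/- Let Γ be a finite weighted graph. If Γ admits a good separating set, then the automorphism group A_Γ of the Cayley graph C_Γ has uncountable vertex stabilisers; that is, for every vertex w of C_Γ, the stabiliser of w in A_Γ is uncountable. -/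
/-!
Setup for Cayley graphs of Coxeter groups.

A weighted graph `Γ = (VΓ, EΓ, m)` in the sense of the paper is encoded by a Mathlib
`CoxeterMatrix B` (`B = VΓ`): the weight `m x y` is `M x y`, where the entry `0` encodes `∞`
(no relation / no edge).  The associated Coxeter group is `M.Group`, with standard generators
`M.simple x`.
-/

open CoxeterMatrix

variable {B : Type*}

set_option linter.unusedSectionVars false
set_option maxHeartbeats 1600000

namespace CGAux

open CoxeterMatrix Function

variable {B : Type*}

noncomputable section
open Classical

/-- Cosine-matrix entries for the geometric representation. -/
def kf (M : CoxeterMatrix B) (x y : B) : ℝ :=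
  if M x y = 0 then -1 else -Real.cos (Real.pi / (M x y))

lemma kf_diag (M : CoxeterMatrix B) (x : B) : kf M x x = 1 := by
  simp [kf, M.diagonal x]

lemma kf_symm (M : CoxeterMatrix B) (x y : B) : kf M x y = kf M y x := by
  simp [kf, M.symmetric x y]

variable [Fintype B]

/-- basis vector -/
def ev (x : B) : B → ℝ := fun b => if b = x then 1 else 0

lemma ev_self (x : B) : ev x x = (1:ℝ) := by simp [ev]

lemma ev_ne {x b : B} (h : b ≠ x) : ev x b = (0:ℝ) := by simp [ev, h]

/-- bilinear pairing against the `x`-th row. -/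
def ip (M : CoxeterMatrix B) (x : B) (v : B → ℝ) : ℝ := ∑ b, kf M x b * v b

lemma ip_add (M : CoxeterMatrix B) (x : B) (v w : B → ℝ) :
    ip M x (v + w) = ip M x v + ip M x w := by
  simp [ip, mul_add, Finset.sum_add_distrib]

lemma ip_smul (M : CoxeterMatrix B) (x : B) (a : ℝ) (v : B → ℝ) :
    ip M x (a • v) = a * ip M x v := by
  simp only [ip, Pi.smul_apply, smul_eq_mul, Finset.mul_sum]
  exact Finset.sum_congr rfl fun b _ => by ring

lemma ip_ev (M : CoxeterMatrix B) (x y : B) : ip M x (ev y) = kf M x y := by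
  simp only [ip, ev]
  rw [Finset.sum_eq_single y]
  · simp
  · intro b _ hb; simp [hb]
  · intro h; exact absurd (Finset.mem_univ y) h

/-- the reflection attached to `x`. -/
def rf (M : CoxeterMatrix B) (x : B) : (B → ℝ) → (B → ℝ) :=
  fun v => v + (-2 * ip M x v) • ev x

lemma ip_rf (M : CoxeterMatrix B) (x y : B) (v : B → ℝ) :
    ip M y (rf M x v) = ip M y v + (-2 * ip M x v) * kf M y x := by
  rw [rf, ip_add, ip_smul, ip_ev]

lemma rf_invol (M : CoxeterMatrix B) (x : B) (v : B → ℝ) : rf M x (rf M x v) = v := by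
  have h1 : ip M x (rf M x v) = - ip M x v := by
    rw [ip_rf, kf_diag]; ring
  rw [rf, h1, rf]
  ext b
  simp only [Pi.add_apply, Pi.smul_apply, smul_eq_mul]
  ring

/-- the reflection as a permutation -/
def rfPerm (M : CoxeterMatrix B) (x : B) : Equiv.Perm (B → ℝ) :=
  ⟨rf M x, rf M x, rf_invol M x, rf_invol M x⟩

lemma rfPerm_apply (M : CoxeterMatrix B) (x : B) (v : B → ℝ) :
    rfPerm M x v = rf M x v := rfl

end

noncomputable section
open Classical
variable {B : Type*} [Fintype B]

/-- One step of the `(u, t, A, B)` recurrence for the dihedral computation. -/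
def dstep (c : ℝ) : ℝ × ℝ × ℝ × ℝ → ℝ × ℝ × ℝ × ℝ :=
  fun p => (-p.1 - 2*c*p.2.1, 2*c*p.1 + (4*c^2-1)*p.2.1,
            p.2.2.1 - 2*(p.1 + 2*c*p.2.1), p.2.2.2 - 2*p.2.1)

def dseq (c : ℝ) (u0 t0 : ℝ) (j : ℕ) : ℝ × ℝ × ℝ × ℝ := (dstep c)^[j] (u0, t0, 0, 0)

lemma dseq_succ (c u0 t0 : ℝ) (j : ℕ) :
    dseq c u0 t0 (j+1) = dstep c (dseq c u0 t0 j) := by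
  simp [dseq, Function.iterate_succ_apply']

/-- The main positional induction: iterating `rfPerm x ∘ rfPerm y` moves `v` inside
the plane spanned by `ev x`, `ev y`, with coefficients given by `dseq`. -/
lemma dihedral_iterate (M : CoxeterMatrix B) {x y : B} (hxy : x ≠ y) (c : ℝ)
    (hxx : kf M x x = 1) (hyy : kf M y y = 1)
    (hxy' : kf M x y = -c) (hyx' : kf M y x = -c)
    (v : B → ℝ) (j : ℕ) :
    ((rfPerm M x * rfPerm M y)^j) v
        = v + (dseq c (ip M x v) (ip M y v) j).2.2.1 • ev x
            + (dseq c (ip M x v) (ip M y v) j).2.2.2 • ev y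
      ∧ ip M x (((rfPerm M x * rfPerm M y)^j) v) = (dseq c (ip M x v) (ip M y v) j).1
      ∧ ip M y (((rfPerm M x * rfPerm M y)^j) v) = (dseq c (ip M x v) (ip M y v) j).2.1 := by
  induction j with
  | zero =>
      refine ⟨by ext b; simp [dseq, ev], by simp [dseq], by simp [dseq]⟩
  | succ j ih =>
      obtain ⟨hv, hu, ht⟩ := ih
      set Q := dseq c (ip M x v) (ip M y v) j with hQ
      set w := ((rfPerm M x * rfPerm M y)^j) v with hw
      have hstep : ((rfPerm M x * rfPerm M y)^(j+1)) v
          = rfPerm M x (rfPerm M y w) := by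
        rw [pow_succ']
        simp [Equiv.Perm.mul_apply]
        exact hw.symm
      -- compute
      have h1 : rfPerm M y w = w + (-2 * Q.2.1) • ev y := by
        rw [rfPerm_apply, rf, ht]
      have hipx1 : ip M x (rfPerm M y w) = Q.1 + 2*c*Q.2.1 := by
        rw [h1, ip_add, ip_smul, ip_ev, hu, hxy']; ring
      have h2 : rfPerm M x (rfPerm M y w)
          = w + (-2 * Q.2.1) • ev y + (-2 * (Q.1 + 2*c*Q.2.1)) • ev x := by
        rw [rfPerm_apply, rf, hipx1, h1]
      constructor
      · rw [hstep, h2, hv, dseq_succ, dstep]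
        ext b
        simp only [Pi.add_apply, Pi.smul_apply, smul_eq_mul]
        ring
      constructor
      · rw [hstep, h2, ip_add, ip_add, ip_smul, ip_smul, ip_ev, ip_ev, hu, hxx, hxy',
          dseq_succ, dstep]
        ring
      · rw [hstep, h2, ip_add, ip_add, ip_smul, ip_smul, ip_ev, ip_ev, ht, hyx', hyy,
          dseq_succ, dstep]
        ring

/-- Complex eigen-decomposition of the `(u,t)` recursion. -/
lemma dseq_complex (c u0 t0 : ℝ) (E : ℂ) (hE : E ≠ 0) (hc : (c:ℂ) = (E + E⁻¹)/2) (j : ℕ) :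
    ((dseq c u0 t0 j).1 : ℂ) + E * ((dseq c u0 t0 j).2.1 : ℂ)
      = (E^2)^j * ((u0 : ℂ) + E * (t0 : ℂ)) := by
  induction j with
  | zero => simp [dseq]
  | succ j ih =>
      have key : ∀ u t : ℝ, ((-u - 2*c*t : ℝ) : ℂ) + E * ((2*c*u + (4*c^2-1)*t : ℝ) : ℂ)
          = E^2 * ((u:ℂ) + E * (t:ℂ)) := by
        intro u t
        push_cast
        rw [hc]
        field_simp
        ring
      rw [dseq_succ, dstep, key, ih, pow_succ]
      ring


lemma dseq_complex' (c u0 t0 : ℝ) (E : ℂ) (hE : E ≠ 0) (hc : (c:ℂ) = (E + E⁻¹)/2) (j : ℕ) :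
    ((dseq c u0 t0 j).1 : ℂ) + E⁻¹ * ((dseq c u0 t0 j).2.1 : ℂ)
      = (E⁻¹^2)^j * ((u0 : ℂ) + E⁻¹ * (t0 : ℂ)) := by
  refine dseq_complex c u0 t0 E⁻¹ (inv_ne_zero hE) ?_ j
  rw [hc, inv_inv, add_comm]

lemma dseq_sum_ut (c u0 t0 : ℝ) (E : ℂ) (hE : E ≠ 0) (hc : (c:ℂ) = (E + E⁻¹)/2)
    (m : ℕ) (hε1 : E^2 ≠ 1) (hεm : (E^2)^m = 1) :
    (∑ j ∈ Finset.range m, (dseq c u0 t0 j).2.1) = 0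
      ∧ (∑ j ∈ Finset.range m, (dseq c u0 t0 j).1) = 0 := by
  have hgeo : (∑ j ∈ Finset.range m, (E^2)^j) = 0 := by
    rw [geom_sum_eq hε1, hεm, sub_self, zero_div]
  have hE2 : E⁻¹^2 ≠ 1 := by
    intro h
    apply hε1
    have : (E^2) * (E⁻¹^2) = 1 := by field_simp
    rw [h, mul_one] at this; exact this
  have hEm2 : (E⁻¹^2)^m = 1 := by
    have : ((E^2)^m) * ((E⁻¹^2)^m) = 1 := by
      rw [← mul_pow, inv_pow, mul_inv_cancel₀ (pow_ne_zero 2 hE), one_pow]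
    rw [hεm, one_mul] at this; exact this
  have hgeo' : (∑ j ∈ Finset.range m, (E⁻¹^2)^j) = 0 := by
    rw [geom_sum_eq hE2, hEm2, sub_self, zero_div]
  have hz : (∑ j ∈ Finset.range m, (((dseq c u0 t0 j).1 : ℂ) + E * ((dseq c u0 t0 j).2.1 : ℂ)))
      = 0 := by
    calc _ = ∑ j ∈ Finset.range m, (E^2)^j * ((u0 : ℂ) + E * (t0:ℂ)) := by
            exact Finset.sum_congr rfl fun j _ => dseq_complex c u0 t0 E hE hc j
      _ = (∑ j ∈ Finset.range m, (E^2)^j) * ((u0 : ℂ) + E * (t0:ℂ)) := by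
            rw [Finset.sum_mul]
      _ = 0 := by rw [hgeo, zero_mul]
  have hw : (∑ j ∈ Finset.range m, (((dseq c u0 t0 j).1 : ℂ) + E⁻¹ * ((dseq c u0 t0 j).2.1 : ℂ)))
      = 0 := by
    calc _ = ∑ j ∈ Finset.range m, (E⁻¹^2)^j * ((u0 : ℂ) + E⁻¹ * (t0:ℂ)) := by
            exact Finset.sum_congr rfl fun j _ => dseq_complex' c u0 t0 E hE hc j
      _ = (∑ j ∈ Finset.range m, (E⁻¹^2)^j) * ((u0 : ℂ) + E⁻¹ * (t0:ℂ)) := by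
            rw [Finset.sum_mul]
      _ = 0 := by rw [hgeo', zero_mul]
  have hEE : E - E⁻¹ ≠ 0 := by
    intro h
    apply hε1
    have h' : E = E⁻¹ := by linear_combination h
    have : E^2 = E * E⁻¹ := by rw [← h']; ring
    rw [mul_inv_cancel₀ hE] at this; exact this
  have hsum_t : (∑ j ∈ Finset.range m, ((dseq c u0 t0 j).2.1 : ℂ)) = 0 := by
    have hsub := sub_eq_zero_of_eq (hz.trans hw.symm)
    rw [← Finset.sum_sub_distrib] at hsub
    have : (∑ j ∈ Finset.range m, (E - E⁻¹) * ((dseq c u0 t0 j).2.1 : ℂ)) = 0 := by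
      rw [← hsub]; exact Finset.sum_congr rfl fun j _ => by ring
    rw [← Finset.mul_sum] at this
    exact (mul_eq_zero.mp this).resolve_left hEE
  have hsum_u : (∑ j ∈ Finset.range m, ((dseq c u0 t0 j).1 : ℂ)) = 0 := by
    have := hz
    rw [Finset.sum_add_distrib, ← Finset.mul_sum, hsum_t, mul_zero, add_zero] at this
    exact this
  constructor
  · exact_mod_cast hsum_t.symm ▸ (by push_cast; rfl :
      ((∑ j ∈ Finset.range m, (dseq c u0 t0 j).2.1 : ℝ) : ℂ)
        = ∑ j ∈ Finset.range m, ((dseq c u0 t0 j).2.1 : ℂ))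
  · exact_mod_cast hsum_u.symm ▸ (by push_cast; rfl :
      ((∑ j ∈ Finset.range m, (dseq c u0 t0 j).1 : ℝ) : ℂ)
        = ∑ j ∈ Finset.range m, ((dseq c u0 t0 j).1 : ℂ))

lemma dseq_AB (c u0 t0 : ℝ) (j : ℕ) :
    (dseq c u0 t0 j).2.2.1
        = -2 * ∑ i ∈ Finset.range j, ((dseq c u0 t0 i).1 + 2*c*(dseq c u0 t0 i).2.1)
      ∧ (dseq c u0 t0 j).2.2.2 = -2 * ∑ i ∈ Finset.range j, (dseq c u0 t0 i).2.1 := by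
  induction j with
  | zero => simp [dseq]
  | succ j ih =>
      rw [dseq_succ, dstep, Finset.sum_range_succ, Finset.sum_range_succ]
      constructor
      · rw [ih.1]; ring
      · rw [ih.2]; ring


lemma rf_rel (M : CoxeterMatrix B) {x y : B} (hxy : x ≠ y) (hM0 : M x y ≠ 0) :
    (rfPerm M x * rfPerm M y)^(M x y) = 1 := by
  set m := M x y with hm
  have hm2 : 2 ≤ m := by
    have h1 := M.off_diagonal x y hxy
    omega
  set θ : ℝ := Real.pi / m with hθ
  have hmR : (0:ℝ) < m := by positivity
  have hθpos : 0 < θ := by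
    rw [hθ]; positivity
  have hθle : θ ≤ Real.pi / 2 := by
    rw [hθ]
    apply div_le_div_of_nonneg_left Real.pi_pos.le (by norm_num)
    exact_mod_cast hm2
  set c : ℝ := Real.cos θ with hc
  have hkxy : kf M x y = -c := by rw [kf, if_neg hM0]
  have hkyx : kf M y x = -c := by rw [kf_symm, hkxy]
  set E : ℂ := Complex.exp (θ * Complex.I) with hE
  have hEne : E ≠ 0 := Complex.exp_ne_zero _
  have hEinv : E⁻¹ = Complex.exp (-(θ * Complex.I)) := by
    rw [hE, ← Complex.exp_neg]
  have hcE : (c:ℂ) = (E + E⁻¹)/2 := by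
    rw [hc, Complex.ofReal_cos, Complex.cos, hE, hEinv, neg_mul]
  have hE2 : E^2 = Complex.exp (2*θ * Complex.I) := by
    rw [hE, ← Complex.exp_nat_mul]; ring_nf
  have hε1 : E^2 ≠ 1 := by
    rw [hE2]
    intro h
    obtain ⟨n, hn⟩ := Complex.exp_eq_one_iff.mp h
    have hI : (2*θ : ℂ) = (n : ℂ) * (2 * Real.pi) := by
      have h2 : (2*(θ:ℂ)) * Complex.I = ((n:ℂ) * (2 * Real.pi)) * Complex.I :=
        hn.trans (by ring)
      exact mul_right_cancel₀ Complex.I_ne_zero h2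
    have hreal : 2*θ = (n:ℝ) * (2 * Real.pi) := by
      exact_mod_cast hI
    have hθeq : θ = n * Real.pi := by nlinarith [Real.pi_pos]
    rcases le_or_gt (n:ℝ) 0 with hn0 | hn0
    · nlinarith [Real.pi_pos]
    · have : (1:ℝ) ≤ n := by exact_mod_cast hn0
      nlinarith [Real.pi_pos]
  have hεm : (E^2)^m = 1 := by
    rw [hE2, ← Complex.exp_nat_mul]
    have : (m:ℂ) * (2*θ*Complex.I) = 2 * Real.pi * Complex.I := by
      have hmne : (m:ℂ) ≠ 0 := by
        exact_mod_cast (by omega : m ≠ 0)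
      rw [hθ]
      push_cast
      field_simp
    rw [this, Complex.exp_two_pi_mul_I]
  refine Equiv.ext fun v => ?_
  rw [Equiv.Perm.one_apply]
  show ((rfPerm M x * rfPerm M y)^m) v = v
  have hiter := dihedral_iterate M hxy c (kf_diag M x) (kf_diag M y) hkxy hkyx v m
  have hsums := dseq_sum_ut c (ip M x v) (ip M y v) E hEne hcE m hε1 hεm
  have hAB := dseq_AB c (ip M x v) (ip M y v) m
  have hA : (dseq c (ip M x v) (ip M y v) m).2.2.1 = 0 := by
    rw [hAB.1]
    have : (∑ i ∈ Finset.range m, ((dseq c (ip M x v) (ip M y v) i).1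
        + 2*c*(dseq c (ip M x v) (ip M y v) i).2.1)) = 0 := by
      rw [Finset.sum_add_distrib, hsums.2, ← Finset.mul_sum, hsums.1, zero_add, mul_zero]
    rw [this, mul_zero]
  have hB : (dseq c (ip M x v) (ip M y v) m).2.2.2 = 0 := by
    rw [hAB.2, hsums.1, mul_zero]
  rw [hiter.1, hA, hB]
  ext b
  simp

/-- Liftability of the geometric reflections. -/
lemma rf_liftable (M : CoxeterMatrix B) :
    M.IsLiftable (fun x => rfPerm M x) := by
  intro x y
  by_cases hxy : x = y
  · subst hxy
    rw [M.diagonal x, pow_one]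
    refine Equiv.ext fun v => ?_
    rw [Equiv.Perm.mul_apply, Equiv.Perm.one_apply]
    exact rf_invol M x v
  · by_cases hM0 : M x y = 0
    · rw [hM0, pow_zero]
    · exact rf_rel M hxy hM0

/-- The geometric representation. -/
def geo (M : CoxeterMatrix B) : M.Group →* Equiv.Perm (B → ℝ) :=
  M.toCoxeterSystem.lift ⟨fun x => rfPerm M x, rf_liftable M⟩

lemma geo_simple (M : CoxeterMatrix B) (x : B) : geo M (M.simple x) = rfPerm M x := by
  have := M.toCoxeterSystem.lift_apply_simple (rf_liftable M) x
  rwa [M.toCoxeterSystem_simple] at this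

/-- distinctness of the simple generators. -/
lemma simple_injective (M : CoxeterMatrix B) {x y : B} (hxy : x ≠ y) :
    M.simple x ≠ M.simple y := by
  intro h
  have h2 : rfPerm M x (ev x) = rfPerm M y (ev x) := by
    rw [← geo_simple, ← geo_simple, h]
  have h3 : rf M x (ev x) x = rf M y (ev x) x := congrFun h2 x
  rw [rf, rf, ip_ev, ip_ev, kf_diag] at h3
  simp only [Pi.add_apply, Pi.smul_apply, smul_eq_mul, ev_self, ev_ne hxy] at h3
  norm_num at h3


lemma geo_fix_off (M : CoxeterMatrix B) (Γ : Set B) {g : M.Group}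
    (hg : g ∈ Subgroup.closure (M.simple '' Γ)) :
    ∀ (v : B → ℝ) (b : B), b ∉ Γ → geo M g v b = v b := by
  induction hg using Subgroup.closure_induction with
  | mem a ha =>
      obtain ⟨x, hxΓ, rfl⟩ := ha
      intro v b hb
      rw [geo_simple, rfPerm_apply, rf]
      have : b ≠ x := fun h => hb (h ▸ hxΓ)
      simp [ev_ne this]
  | one => intro v b _; simp
  | mul a a' _ _ iha iha' =>
      intro v b hb
      rw [map_mul, Equiv.Perm.mul_apply, iha _ _ hb, iha' _ _ hb]
  | inv a _ iha =>
      intro v b hb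
      have h1 : geo M a (geo M a⁻¹ v) = v := by
        rw [← Equiv.Perm.mul_apply, ← map_mul, mul_inv_cancel, map_one,
          Equiv.Perm.one_apply]
      conv_rhs => rw [← h1]
      rw [iha _ _ hb]

lemma dseq_one (j : ℕ) : dseq 1 (-1) 1 j = (-1, 1, -2*(j:ℝ), -2*(j:ℝ)) := by
  induction j with
  | zero => simp [dseq]
  | succ j ih =>
      rw [dseq_succ, ih, dstep]
      push_cast
      norm_num
      ring

/-- If `M ξ d = 0` with `ξ ∈ Γ`, `d ∉ Γ`, then no positive power of
`s ξ * s d` lies in the standard subgroup generated by `Γ`. -/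
lemma pow_not_mem_closure (M : CoxeterMatrix B) (Γ : Set B) {ξ d : B}
    (hξΓ : ξ ∈ Γ) (hdΓ : d ∉ Γ) (hMξd : M ξ d = 0) (k : ℕ)
    (hk : (M.simple ξ * M.simple d)^k ∈ Subgroup.closure (M.simple '' Γ)) : k = 0 := by
  have hξd : ξ ≠ d := fun h => hdΓ (h ▸ hξΓ)
  have hMdξ : M d ξ = 0 := by rw [M.symmetric]; exact hMξd
  have hkξd : kf M ξ d = -1 := by rw [kf, if_pos hMξd]
  have hkdξ : kf M d ξ = -1 := by rw [kf, if_pos hMdξ]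
  have hiter := dihedral_iterate M hξd 1 (kf_diag M ξ) (kf_diag M d)
    (by rw [hkξd]) (by rw [hkdξ]) (ev d) k
  have hu0 : ip M ξ (ev d) = -1 := by rw [ip_ev, hkξd]
  have ht0 : ip M d (ev d) = 1 := by rw [ip_ev, kf_diag]
  rw [hu0, ht0, dseq_one] at hiter
  have hgeo : geo M ((M.simple ξ * M.simple d)^k) = (rfPerm M ξ * rfPerm M d)^k := by
    rw [map_pow, map_mul, geo_simple, geo_simple]
  have hcoord := geo_fix_off M Γ hk (ev d) d hdΓ
  rw [hgeo] at hcoord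
  rw [hiter.1] at hcoord
  simp only [Pi.add_apply, Pi.smul_apply, smul_eq_mul, ev_self,
    ev_ne (Ne.symm hξd)] at hcoord
  have : -2*(k:ℝ) = 0 := by linarith
  have : (k:ℝ) = 0 := by linarith
  exact_mod_cast this

end


noncomputable section
open Classical

variable {B : Type*} (M : CoxeterMatrix B)

local notation "W" => M.Group
local notation "sp" => M.simple
local notation "cs" => M.toCoxeterSystem

/-- the twisting of letters: apply `τ` at vertices in `U`. -/
def twl (τ : Equiv.Perm B) (U : Set M.Group) (v : M.Group) (x : B) : B :=
  if v ∈ U then τ x else x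

section Action

/-- hypothesis package: `U` is a union of cosets of the `Γ₁`-standard subgroup and `τ`
is supported on `Γ₁`. -/
def TwistOK (Γ₁ : Set B) (τ : Equiv.Perm B) (U : Set M.Group) : Prop :=
  (∀ x y, M (τ x) (τ y) = M x y) ∧
  (∀ x, x ∉ Γ₁ → τ x = x) ∧
  (∀ x y, x ∈ Γ₁ → y ∉ Γ₁ → τ x = x ∨ M x y = 0) ∧
  (∀ (v : M.Group) (x : B), x ∈ Γ₁ → (v * M.simple x ∈ U ↔ v ∈ U))

theorem sp_inv (x : B) : (M.simple x)⁻¹ = M.simple x := by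
  rw [← M.toCoxeterSystem_simple]
  exact M.toCoxeterSystem.inv_simple x

theorem twl_step {Γ₁ : Set B} {τ : Equiv.Perm B} {U : Set M.Group}
    (h : TwistOK M Γ₁ τ U) (v : M.Group) (x : B) :
    twl M τ U (v * M.simple x) x = twl M τ U v x := by
  by_cases hx : x ∈ Γ₁
  · unfold twl
    rw [if_congr (h.2.2.2 v x hx) rfl rfl]
  · unfold twl
    rw [h.2.1 x hx, ite_self, ite_self]

/-- the basic permutation of `W × W` attached to the letter `x`. -/
def fperm {Γ₁ : Set B} {τ : Equiv.Perm B} {U : Set M.Group}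
    (h : TwistOK M Γ₁ τ U) (x : B) : Equiv.Perm (M.Group × M.Group) where
  toFun p := (p.1 * M.simple x, p.2 * M.simple (twl M τ U p.1 x))
  invFun p := (p.1 * M.simple x, p.2 * M.simple (twl M τ U p.1 x))
  left_inv p := by
    obtain ⟨v, u⟩ := p
    dsimp only
    rw [twl_step M h v x]
    ext
    · exact M.toCoxeterSystem.simple_mul_simple_cancel_right x
    · exact M.toCoxeterSystem.simple_mul_simple_cancel_right _
  right_inv p := by
    obtain ⟨v, u⟩ := p
    dsimp only
    rw [twl_step M h v x]
    ext
    · exact M.toCoxeterSystem.simple_mul_simple_cancel_right x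
    · exact M.toCoxeterSystem.simple_mul_simple_cancel_right _

theorem fperm_apply {Γ₁ : Set B} {τ : Equiv.Perm B} {U : Set M.Group}
    (h : TwistOK M Γ₁ τ U) (x : B) (p : M.Group × M.Group) :
    fperm M h x p = (p.1 * M.simple x, p.2 * M.simple (twl M τ U p.1 x)) := rfl

/-- the generic orbit computation: if the twisted letters along the `(x,y)`-orbit of `v`
are constantly `b` (for `y`-steps) and `a` (for `x`-steps), then powers of
`fperm x * fperm y` act by alternating words. -/
theorem fperm_pow {Γ₁ : Set B} {τ : Equiv.Perm B} {U : Set M.Group}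
    (h : TwistOK M Γ₁ τ U) (x y a b : B) (v u : M.Group)
    (H1 : ∀ j : ℕ, twl M τ U (v * (M.simple y * M.simple x)^j) y = b)
    (H2 : ∀ j : ℕ, twl M τ U (v * (M.simple y * M.simple x)^j * M.simple y) x = a)
    (k : ℕ) :
    ((fperm M h x * fperm M h y)^k) (v, u)
      = (v * (M.simple y * M.simple x)^k, u * (M.simple b * M.simple a)^k) := by
  induction k with
  | zero => simp
  | succ k ih =>
      rw [pow_succ', Equiv.Perm.mul_apply, ih, Equiv.Perm.mul_apply,
        fperm_apply, fperm_apply]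
      dsimp only
      rw [H1 k, H2 k]
      ext
      · show v * (M.simple y * M.simple x)^k * M.simple y * M.simple x = _
        rw [pow_succ]
        simp [mul_assoc]
      · show u * (M.simple b * M.simple a)^k * M.simple b * M.simple a = _
        rw [pow_succ']
        rw [pow_succ]
        simp [mul_assoc]

theorem fperm_liftable {Γ₁ : Set B} {τ : Equiv.Perm B} {U : Set M.Group}
    (h : TwistOK M Γ₁ τ U) :
    M.IsLiftable (fun x => fperm M h x) := by
  intro x y
  by_cases hxy : x = y
  · subst hxy
    rw [M.diagonal x, pow_one]
    refine Equiv.ext fun p => ?_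
    rw [Equiv.Perm.mul_apply, Equiv.Perm.one_apply]
    exact (fperm M h x).left_inv p
  · by_cases hM0 : M x y = 0
    · rw [hM0, pow_zero]
    -- now both x y with M x y ≠ 0 : they are both in Γ₁ or both fixed by τ
    · have hcase : (x ∈ Γ₁ ∧ y ∈ Γ₁) ∨ (τ x = x ∧ τ y = y) := by
        by_cases hx : x ∈ Γ₁ <;> by_cases hy : y ∈ Γ₁
        · exact Or.inl ⟨hx, hy⟩
        · rcases h.2.2.1 x y hx hy with h1 | h1
          · exact Or.inr ⟨h1, h.2.1 y hy⟩
          · exact absurd h1 hM0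
        · rcases h.2.2.1 y x hy hx with h1 | h1
          · exact Or.inr ⟨h.2.1 x hx, h1⟩
          · exact absurd (by rw [M.symmetric]; exact h1) hM0
        · exact Or.inr ⟨h.2.1 x hx, h.2.1 y hy⟩
      refine Equiv.ext fun p => ?_
      obtain ⟨v, u⟩ := p
      rw [Equiv.Perm.one_apply]
      rcases hcase with ⟨hx, hy⟩ | ⟨hτx, hτy⟩
      · -- both in Γ₁: membership in U is constant along the orbit
        have hmem : ∀ g ∈ Subgroup.closure (M.simple '' Γ₁), ∀ v' : M.Group,
            (v' * g ∈ U ↔ v' ∈ U) := by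
          intro g hg
          induction hg using Subgroup.closure_induction with
          | mem a ha =>
              obtain ⟨z, hz, rfl⟩ := ha
              intro v'
              exact h.2.2.2 v' z hz
          | one => intro v'; rw [mul_one]
          | mul a a' ha ha' iha iha' =>
              intro v'
              rw [← mul_assoc]
              exact (iha' _).trans (iha v')
          | inv a ha iha =>
              intro v'
              have := iha (v' * a⁻¹)
              rw [mul_assoc, inv_mul_cancel, mul_one] at this
              exact this.symm
        have hsΓ : ∀ z ∈ Γ₁, M.simple z ∈ Subgroup.closure (M.simple '' Γ₁) := by
          intro z hz
          exact Subgroup.subset_closure ⟨z, hz, rfl⟩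
        have hpowmem : ∀ j : ℕ,
            (M.simple y * M.simple x)^j ∈ Subgroup.closure (M.simple '' Γ₁) := by
          intro j
          exact pow_mem (mul_mem (hsΓ y hy) (hsΓ x hx)) j
        by_cases hv : v ∈ U
        · have key := fperm_pow M h x y (τ x) (τ y) v u
            (fun j => by
              unfold twl
              rw [if_pos (((hmem _ (hpowmem j)) v).mpr hv)])
            (fun j => by
              unfold twl
              rw [if_pos]
              rw [mul_assoc]
              exact ((hmem _ (mul_mem (hpowmem j) (hsΓ y hy))) v).mpr hv)
            (M x y)
          rw [key]
          have e1 : (M.simple y * M.simple x)^(M x y) = 1 :=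
            M.toCoxeterSystem.simple_mul_simple_pow' x y
          have e2 : (M.simple (τ y) * M.simple (τ x))^(M x y) = 1 := by
            have := M.toCoxeterSystem.simple_mul_simple_pow' (τ x) (τ y)
            rwa [h.1 x y] at this
          rw [e1, e2, mul_one, mul_one]
        · have key := fperm_pow M h x y x y v u
            (fun j => by
              unfold twl
              rw [if_neg (fun hmem' => hv (((hmem _ (hpowmem j)) v).mp hmem'))])
            (fun j => by
              unfold twl
              rw [if_neg]
              intro hmem'
              rw [mul_assoc] at hmem'
              exact hv (((hmem _ (mul_mem (hpowmem j) (hsΓ y hy))) v).mp hmem'))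
            (M x y)
          rw [key]
          have e1 : (M.simple y * M.simple x)^(M x y) = 1 :=
            M.toCoxeterSystem.simple_mul_simple_pow' x y
          rw [e1, mul_one, mul_one]
      · -- both fixed by τ
        have key := fperm_pow M h x y x y v u
          (fun j => by unfold twl; rw [hτy, ite_self])
          (fun j => by unfold twl; rw [hτx, ite_self])
          (M x y)
        rw [key]
        have e1 : (M.simple y * M.simple x)^(M x y) = 1 :=
          M.toCoxeterSystem.simple_mul_simple_pow' x y
        rw [e1, mul_one, mul_one]

end Action

section Alpha

variable {Γ₁ : Set B} {τ : Equiv.Perm B} {U : Set M.Group}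

/-- The homomorphism from the Coxeter group into permutations of `W × W`. -/
def theta (h : TwistOK M Γ₁ τ U) : M.Group →* Equiv.Perm (M.Group × M.Group) :=
  M.toCoxeterSystem.lift ⟨fun x => fperm M h x, fperm_liftable M h⟩

theorem theta_simple (h : TwistOK M Γ₁ τ U) (x : B) :
    theta M h (M.simple x) = fperm M h x := by
  have := M.toCoxeterSystem.lift_apply_simple (fperm_liftable M h) x
  rwa [M.toCoxeterSystem_simple] at this

theorem theta_fst (h : TwistOK M Γ₁ τ U) (g : M.Group) :
    ∀ q : M.Group × M.Group, (theta M h g q).1 = q.1 * g⁻¹ := by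
  refine M.toCoxeterSystem.simple_induction
    (p := fun g => ∀ q : M.Group × M.Group, (theta M h g q).1 = q.1 * g⁻¹) g ?_ ?_ ?_
  · intro i q
    rw [M.toCoxeterSystem_simple, theta_simple, fperm_apply, sp_inv]
  · intro q
    rw [map_one, Equiv.Perm.one_apply, inv_one, mul_one]
  · intro w w' hw hw' q
    rw [map_mul, Equiv.Perm.mul_apply, hw, hw', mul_inv_rev, mul_assoc]

/-- The twisted map on the Cayley graph. -/
def alpha (h : TwistOK M Γ₁ τ U) (g : M.Group) : M.Group := (theta M h g⁻¹ (1,1)).2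

theorem alpha_one (h : TwistOK M Γ₁ τ U) : alpha M h 1 = 1 := by
  rw [alpha, inv_one, map_one, Equiv.Perm.one_apply]

theorem alpha_mul_simple (h : TwistOK M Γ₁ τ U) (v : M.Group) (x : B) :
    alpha M h (v * M.simple x) = alpha M h v * M.simple (twl M τ U v x) := by
  have h1 : (v * M.simple x)⁻¹ = M.simple x * v⁻¹ := by
    rw [mul_inv_rev, sp_inv]
  rw [alpha, h1, map_mul, Equiv.Perm.mul_apply, theta_simple]
  set P := theta M h v⁻¹ (1,1) with hP
  have hP1 : P.1 = v := by
    rw [hP, theta_fst, inv_inv, one_mul]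
  rw [fperm_apply]
  show P.2 * M.simple (twl M τ U P.1 x) = alpha M h v * M.simple (twl M τ U v x)
  rw [hP1]
  rfl

/-- words map to words of the same length -/
theorem alpha_word (h : TwistOK M Γ₁ τ U) (ω : List B) :
    ∃ ω' : List B, ω'.length = ω.length
      ∧ alpha M h (M.toCoxeterSystem.wordProd ω) = M.toCoxeterSystem.wordProd ω' := by
  induction ω using List.reverseRecOn with
  | nil =>
      exact ⟨[], rfl, by simp [CoxeterSystem.wordProd_nil, alpha_one]⟩
  | append_singleton ω x ih =>
      obtain ⟨ω', hlen, hω'⟩ := ih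
      refine ⟨ω' ++ [twl M τ U (M.toCoxeterSystem.wordProd ω) x], by simp [hlen], ?_⟩
      rw [CoxeterSystem.wordProd_append, CoxeterSystem.wordProd_append]
      rw [CoxeterSystem.wordProd_singleton, CoxeterSystem.wordProd_singleton,
        M.toCoxeterSystem_simple, alpha_mul_simple, hω']

/-- preimages of words of the same length -/
theorem alpha_word_pre (h : TwistOK M Γ₁ τ U) (ω : List B) :
    ∃ ω' : List B, ω'.length = ω.length
      ∧ alpha M h (M.toCoxeterSystem.wordProd ω') = M.toCoxeterSystem.wordProd ω := by
  induction ω using List.reverseRecOn with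
  | nil =>
      exact ⟨[], rfl, by simp [CoxeterSystem.wordProd_nil, alpha_one]⟩
  | append_singleton ω x ih =>
      obtain ⟨ω', hlen, hω'⟩ := ih
      set v' := M.toCoxeterSystem.wordProd ω' with hv'
      refine ⟨ω' ++ [if v' ∈ U then τ.symm x else x], by simp [hlen], ?_⟩
      rw [CoxeterSystem.wordProd_append, CoxeterSystem.wordProd_append,
        CoxeterSystem.wordProd_singleton, CoxeterSystem.wordProd_singleton,
        M.toCoxeterSystem_simple, alpha_mul_simple, hω']
      congr 1
      unfold twl
      by_cases hv : v' ∈ U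
      · rw [if_pos hv, if_pos hv, Equiv.apply_symm_apply]
      · rw [if_neg hv, if_neg hv]

theorem mem_graphAut {V : Type*} (G : SimpleGraph V) (σ : Equiv.Perm V) :
    σ ∈ graphAut G ↔ ∀ x y : V, G.Adj (σ x) (σ y) ↔ G.Adj x y := Iff.rfl

section Balls

variable [Finite B]

/-- the ball of radius `n` around the identity -/
def ball (n : ℕ) : Set M.Group :=
  {g | ∃ ω : List B, ω.length ≤ n ∧ g = M.toCoxeterSystem.wordProd ω}

theorem ball_finite (n : ℕ) : (ball M n).Finite := by
  induction n with
  | zero =>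
      refine Set.Finite.subset (Set.finite_singleton (1 : M.Group)) ?_
      rintro g ⟨ω, hlen, rfl⟩
      rw [Nat.le_zero] at hlen
      rw [List.length_eq_zero_iff] at hlen
      subst hlen
      simp
  | succ n ih =>
      have hsub : ball M (n+1) ⊆ ball M n ∪
          ⋃ x : B, (fun g => g * M.simple x) '' ball M n := by
        rintro g ⟨ω, hlen, rfl⟩
        rcases List.eq_nil_or_concat ω with rfl | ⟨ω₀, x, rfl⟩
        · exact Or.inl ⟨[], by simp⟩
        · refine Or.inr (Set.mem_iUnion.mpr ⟨x, ?_⟩)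
          refine ⟨M.toCoxeterSystem.wordProd ω₀, ⟨ω₀, ?_, rfl⟩, ?_⟩
          · simp only [List.concat_eq_append, List.length_append, List.length_singleton] at hlen
            omega
          · rw [List.concat_eq_append, CoxeterSystem.wordProd_append,
              CoxeterSystem.wordProd_singleton, M.toCoxeterSystem_simple]
      exact Set.Finite.subset (ih.union (Set.finite_iUnion fun x => ih.image _)) hsub

theorem mem_ball_word (ω : List B) : M.toCoxeterSystem.wordProd ω ∈ ball M ω.length :=
  ⟨ω, le_rfl, rfl⟩

variable {Γ₁ : Set B} {τ : Equiv.Perm B} {U : Set M.Group}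

theorem alpha_mapsTo (h : TwistOK M Γ₁ τ U) (n : ℕ) :
    Set.MapsTo (alpha M h) (ball M n) (ball M n) := by
  rintro g ⟨ω, hlen, rfl⟩
  obtain ⟨ω', hlen', hω'⟩ := alpha_word M h ω
  exact ⟨ω', hlen' ▸ hlen, hω'⟩

theorem alpha_surjOn (h : TwistOK M Γ₁ τ U) (n : ℕ) :
    Set.SurjOn (alpha M h) (ball M n) (ball M n) := by
  rintro g ⟨ω, hlen, rfl⟩
  obtain ⟨ω', hlen', hω'⟩ := alpha_word_pre M h ω
  exact ⟨M.toCoxeterSystem.wordProd ω', ⟨ω', hlen' ▸ hlen, rfl⟩, hω'⟩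

theorem alpha_injective (h : TwistOK M Γ₁ τ U) : Function.Injective (alpha M h) := by
  intro g₁ g₂ heq
  obtain ⟨ω₁, rfl⟩ := M.toCoxeterSystem.wordProd_surjective g₁
  obtain ⟨ω₂, rfl⟩ := M.toCoxeterSystem.wordProd_surjective g₂
  set n := max ω₁.length ω₂.length with hn
  have h₁ : M.toCoxeterSystem.wordProd ω₁ ∈ ball M n :=
    ⟨ω₁, le_max_left _ _, rfl⟩
  have h₂ : M.toCoxeterSystem.wordProd ω₂ ∈ ball M n :=
    ⟨ω₂, le_max_right _ _, rfl⟩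
  have hbij := ((ball_finite M n).surjOn_iff_bijOn_of_mapsTo (alpha_mapsTo M h n)).mp
    (alpha_surjOn M h n)
  exact hbij.injOn h₁ h₂ heq

theorem alpha_surjective (h : TwistOK M Γ₁ τ U) : Function.Surjective (alpha M h) := by
  intro g
  obtain ⟨ω, rfl⟩ := M.toCoxeterSystem.wordProd_surjective g
  obtain ⟨ω', _, hω'⟩ := alpha_word_pre M h ω
  exact ⟨M.toCoxeterSystem.wordProd ω', hω'⟩

/-- the twisted map as a permutation of the Cayley graph -/
def alphaE (h : TwistOK M Γ₁ τ U) : Equiv.Perm M.Group :=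
  Equiv.ofBijective (alpha M h) ⟨alpha_injective M h, alpha_surjective M h⟩

theorem alphaE_apply (h : TwistOK M Γ₁ τ U) (g : M.Group) : alphaE M h g = alpha M h g := rfl

/-- neighbour set in the Cayley graph -/
def nbr (v : M.Group) : Set M.Group := (fun z => v * z) '' Set.range M.simple

theorem nbr_finite (v : M.Group) : (nbr M v).Finite :=
  (Set.finite_range M.simple).image _

theorem ncard_nbr (v : M.Group) : (nbr M v).ncard = (Set.range M.simple).ncard :=
  Set.ncard_image_of_injective _ (mul_right_injective v)

theorem alpha_image_nbr (h : TwistOK M Γ₁ τ U) (v : M.Group) :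
    alpha M h '' nbr M v = nbr M (alpha M h v) := by
  have hsub : alpha M h '' nbr M v ⊆ nbr M (alpha M h v) := by
    rintro _ ⟨_, ⟨_, ⟨x, rfl⟩, rfl⟩, rfl⟩
    rw [alpha_mul_simple]
    exact ⟨M.simple (twl M τ U v x), ⟨twl M τ U v x, rfl⟩, rfl⟩
  refine Set.eq_of_subset_of_ncard_le hsub ?_ (nbr_finite M _)
  rw [ncard_nbr, Set.ncard_image_of_injective _ (alpha_injective M h), ncard_nbr]

theorem alphaE_mem_graphAut (h : TwistOK M Γ₁ τ U) :
    alphaE M h ∈ graphAut (cayley M) := by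
  rw [mem_graphAut]
  intro a b
  constructor
  · rintro ⟨hne, x, hx⟩
    have hb : alphaE M h b ∈ alpha M h '' nbr M a := by
      rw [alpha_image_nbr]
      exact ⟨M.simple x, ⟨x, rfl⟩, hx.symm⟩
    obtain ⟨u, hu, hub⟩ := hb
    have : u = b := alpha_injective M h hub
    subst this
    obtain ⟨_, ⟨x', rfl⟩, rfl⟩ := hu
    refine ⟨fun hab => hne (congrArg (alphaE M h) hab), x', rfl⟩
  · rintro ⟨hne, x, rfl⟩
    refine ⟨fun hab => hne (alpha_injective M h hab), twl M τ U a x, ?_⟩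
    rw [alphaE_apply, alphaE_apply, alpha_mul_simple]

end Balls
end Alpha
end


noncomputable section
open Classical

variable {B : Type*}

/-- extend a permutation of a subset by the identity -/
def tauOf (Γ₁ : Set B) (σ : Equiv.Perm ↥Γ₁) : Equiv.Perm B where
  toFun b := if h : b ∈ Γ₁ then (σ ⟨b, h⟩ : B) else b
  invFun b := if h : b ∈ Γ₁ then (σ.symm ⟨b, h⟩ : B) else b
  left_inv b := by
    by_cases h : b ∈ Γ₁
    · simp only [dif_pos h, dif_pos (σ ⟨b, h⟩).2, Subtype.coe_eta, Equiv.symm_apply_apply]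
    · simp only [dif_neg h]
  right_inv b := by
    by_cases h : b ∈ Γ₁
    · simp only [dif_pos h, dif_pos (σ.symm ⟨b, h⟩).2, Subtype.coe_eta, Equiv.apply_symm_apply]
    · simp only [dif_neg h]

theorem tauOf_mem (Γ₁ : Set B) (σ : Equiv.Perm ↥Γ₁) {b : B} (h : b ∈ Γ₁) :
    tauOf Γ₁ σ b = ↑(σ ⟨b, h⟩) := dif_pos h

theorem tauOf_off (Γ₁ : Set B) (σ : Equiv.Perm ↥Γ₁) {b : B} (h : b ∉ Γ₁) :
    tauOf Γ₁ σ b = b := dif_neg h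

/-- the reference values of the twisted maps along the test ray. -/
def Pf (M : CoxeterMatrix B) (τ : Equiv.Perm B) (ξ d : B) (f : Set ℕ) : ℕ → M.Group
  | 0 => 1
  | n+1 => Pf M τ ξ d f n * M.simple (if n ∈ f then τ ξ else ξ) * M.simple d

theorem Pf_congr (M : CoxeterMatrix B) (τ : Equiv.Perm B) (ξ d : B) (f f' : Set ℕ) (n : ℕ)
    (h : ∀ j, j < n → (j ∈ f ↔ j ∈ f')) : Pf M τ ξ d f n = Pf M τ ξ d f' n := by
  induction n with
  | zero => rfl
  | succ n ih =>
      show Pf M τ ξ d f n * _ * _ = Pf M τ ξ d f' n * _ * _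
      rw [ih (fun j hj => h j (Nat.lt_succ_of_lt hj)),
        show (if n ∈ f then τ ξ else ξ) = (if n ∈ f' then τ ξ else ξ) from
          if_congr (h n (Nat.lt_succ_self n)) rfl rfl]

theorem cayley_adj (M : CoxeterMatrix B) (u v : M.Group) :
    (cayley M).Adj u v ↔ (u ≠ v ∧ ∃ x : B, v = u * M.simple x) := Iff.rfl

end

end CGAux

-- STATEMENT 14
theorem good_sep_set_uncountable_stabilisers {B : Type*} [Finite B] (M : CoxeterMatrix B)
    (hgood : ∃ S : Set B, IsGoodSepSet M S) (w : M.Group) :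
    ¬ Countable ↥(MulAction.stabilizer ↥(graphAut (cayley M)) w) := by
  classical
  letI : Fintype B := Fintype.ofFinite B
  obtain ⟨S, Γ₁, ⟨hSuniv, hnconn, C, hΓeq, hCsub, hCne, hC'ne, hreach⟩, σ, hσne, hσM, hσS⟩ :=
    hgood
  -- basic containments
  have hSsub : S ⊆ Γ₁ := by rw [hΓeq]; exact Set.subset_union_left
  have hCsubΓ : C ⊆ Γ₁ := by rw [hΓeq]; exact Set.subset_union_right
  -- no edges from C out of Γ₁
  have hD2 : ∀ c ∈ C, ∀ b, b ∉ Γ₁ → M c b = 0 := by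
    intro c hc b hb
    by_contra hM0
    have hbS : b ∈ Sᶜ := fun hbS => hb (hSsub hbS)
    have hcS : c ∈ Sᶜ := hCsub hc
    have hne : c ≠ b := fun h => hb (h ▸ hCsubΓ hc)
    have hadj : ((cGraph M).induce Sᶜ).Adj ⟨c, hcS⟩ ⟨b, hbS⟩ := ⟨hne, hM0⟩
    have hbC : b ∈ C := hreach _ _ hadj.reachable hc
    exact hb (hCsubΓ hbC)
  -- the extended permutation τ
  set τ : Equiv.Perm B := CGAux.tauOf Γ₁ σ with hτdef
  have hτoff : ∀ b, b ∉ Γ₁ → τ b = b := fun b hb => CGAux.tauOf_off Γ₁ σ hb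
  have hτS : ∀ b ∈ S, τ b = b := by
    intro b hb
    rw [hτdef, CGAux.tauOf_mem Γ₁ σ (hSsub hb), hσS ⟨b, hSsub hb⟩ hb]
  have hτC : ∀ b ∈ C, τ b ∈ C := by
    intro b hb
    have hbΓ : b ∈ Γ₁ := hCsubΓ hb
    rw [hτdef, CGAux.tauOf_mem Γ₁ σ hbΓ]
    have hmem : (↑(σ ⟨b, hbΓ⟩) : B) ∈ S ∪ C := by rw [← hΓeq]; exact (σ ⟨b, hbΓ⟩).2
    rcases hmem with hS' | hC'
    · exfalso
      have h1 : σ (σ ⟨b, hbΓ⟩) = σ ⟨b, hbΓ⟩ := hσS _ hS'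
      have h2 : σ ⟨b, hbΓ⟩ = ⟨b, hbΓ⟩ := σ.injective h1
      rw [h2] at hS'
      exact (hCsub hb) hS'
    · exact hC'
  have hΓcases : ∀ b ∈ Γ₁, b ∈ S ∨ b ∈ C := by
    intro b hb; rw [hΓeq] at hb; exact hb
  have hτM : ∀ x y, M (τ x) (τ y) = M x y := by
    intro x y
    by_cases hx : x ∈ Γ₁ <;> by_cases hy : y ∈ Γ₁
    · rw [hτdef, CGAux.tauOf_mem Γ₁ σ hx, CGAux.tauOf_mem Γ₁ σ hy]
      exact hσM ⟨x, hx⟩ ⟨y, hy⟩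
    · rw [hτoff y hy]
      rcases hΓcases x hx with hxS | hxC
      · rw [hτS x hxS]
      · rw [hD2 _ (hτC x hxC) y hy, hD2 _ hxC y hy]
    · rw [hτoff x hx]
      rcases hΓcases y hy with hyS | hyC
      · rw [hτS y hyS]
      · rw [M.symmetric x (τ y), M.symmetric x y, hD2 _ (hτC y hyC) x hx, hD2 _ hyC x hx]
    · rw [hτoff x hx, hτoff y hy]
  have hcross : ∀ x y, x ∈ Γ₁ → y ∉ Γ₁ → τ x = x ∨ M x y = 0 := by
    intro x y hx hy
    rcases hΓcases x hx with hxS | hxC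
    · exact Or.inl (hτS x hxS)
    · exact Or.inr (hD2 x hxC y hy)
  -- the moved letter ξ
  have hexa : ∃ a : ↥Γ₁, σ a ≠ a := by
    by_contra hcon
    push_neg at hcon
    exact hσne (Equiv.ext fun a => (hcon a).trans rfl)
  obtain ⟨a, ha⟩ := hexa
  set ξ : B := (a : B) with hξdef
  have hξΓ : ξ ∈ Γ₁ := a.2
  have hτξ : τ ξ = ↑(σ a) := CGAux.tauOf_mem Γ₁ σ a.2
  have hτξne : τ ξ ≠ ξ := by
    rw [hτξ]
    exact fun h => ha (Subtype.coe_injective h)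
  have hξC : ξ ∈ C := by
    rcases hΓcases ξ hξΓ with hS' | hC'
    · exact absurd (hσS a hS') ha
    · exact hC'
  -- the outside letter d
  obtain ⟨d, hd⟩ := hC'ne
  have hdΓ : d ∉ Γ₁ := by
    rw [hΓeq]
    rintro (hdS | hdC)
    · exact hd.1 hdS
    · exact hd.2 hdC
  have hMξd : M ξ d = 0 := hD2 ξ hξC d hdΓ
  -- subgroup and the ray
  set H₁ : Subgroup M.Group := Subgroup.closure (M.simple '' Γ₁) with hH₁def
  set g0 : M.Group := M.simple ξ * M.simple d with hg0def
  have hpow : ∀ k : ℕ, g0 ^ k ∈ H₁ → k = 0 :=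
    fun k hk => CGAux.pow_not_mem_closure M Γ₁ hξΓ hdΓ hMξd k hk
  have hcoset : ∀ n k : ℕ, ((g0 ^ n)⁻¹ * g0 ^ k ∈ H₁) ↔ n = k := by
    intro n k
    constructor
    · intro hmem
      rcases le_total n k with hle | hle
      · have h2 : g0 ^ k = g0 ^ n * g0 ^ (k - n) := by
          rw [← pow_add]
          congr 1
          omega
        rw [h2, inv_mul_cancel_left] at hmem
        have := hpow _ hmem
        omega
      · have h2 : g0 ^ n = g0 ^ k * g0 ^ (n - k) := by
          rw [← pow_add]
          congr 1
          omega
        have he : (g0 ^ n)⁻¹ * g0 ^ k = (g0 ^ (n - k))⁻¹ := by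
          rw [h2, mul_inv_rev, mul_assoc, inv_mul_cancel, mul_one]
        rw [he, inv_mem_iff] at hmem
        have := hpow _ hmem
        omega
    · rintro rfl
      rw [inv_mul_cancel]
      exact one_mem _
  -- the family of coset unions
  set Uf : Set ℕ → Set M.Group := fun f => {v | ∃ n ∈ f, (g0 ^ n)⁻¹ * v ∈ H₁} with hUfdef
  have hUmem : ∀ (f : Set ℕ) (v : M.Group) (x : B), x ∈ Γ₁ →
      (v * M.simple x ∈ Uf f ↔ v ∈ Uf f) := by
    intro f v x hx
    have hsx : M.simple x ∈ H₁ := Subgroup.subset_closure ⟨x, hx, rfl⟩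
    constructor
    · rintro ⟨n, hn, hmem⟩
      rw [← mul_assoc] at hmem
      exact ⟨n, hn, (mul_mem_cancel_right hsx).mp hmem⟩
    · rintro ⟨n, hn, hmem⟩
      exact ⟨n, hn, by rw [← mul_assoc]; exact (mul_mem_cancel_right hsx).mpr hmem⟩
  have hTOK : ∀ f : Set ℕ, CGAux.TwistOK M Γ₁ τ (Uf f) :=
    fun f => ⟨hτM, hτoff, hcross, hUmem f⟩
  have hmemU : ∀ (f : Set ℕ) (k : ℕ), (g0 ^ k ∈ Uf f) ↔ k ∈ f := by
    intro f k
    constructor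
    · rintro ⟨n, hn, hmem⟩
      rwa [(hcoset n k).mp hmem] at hn
    · intro hk
      exact ⟨k, hk, by rw [inv_mul_cancel]; exact one_mem _⟩
  -- values of alpha along the ray
  have htwl_d : ∀ (f : Set ℕ) (v : M.Group), CGAux.twl M τ (Uf f) v d = d := by
    intro f v
    unfold CGAux.twl
    rw [hτoff d hdΓ, ite_self]
  have htwl_ξ : ∀ (f : Set ℕ) (n : ℕ),
      CGAux.twl M τ (Uf f) (g0 ^ n) ξ = if n ∈ f then τ ξ else ξ := by
    intro f n
    unfold CGAux.twl
    rw [if_congr (hmemU f n) rfl rfl]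
  have halpha_pow : ∀ (f : Set ℕ) (n : ℕ),
      CGAux.alpha M (hTOK f) (g0 ^ n) = CGAux.Pf M τ ξ d f n := by
    intro f n
    induction n with
    | zero => rw [pow_zero, CGAux.alpha_one]; rfl
    | succ n ih =>
        have hstep : g0 ^ (n+1) = (g0 ^ n * M.simple ξ) * M.simple d := by
          rw [pow_succ, hg0def, mul_assoc]
        rw [hstep, CGAux.alpha_mul_simple, CGAux.alpha_mul_simple, ih, htwl_d f,
          htwl_ξ f n]
        rfl
  have halpha_pow' : ∀ (f : Set ℕ) (n : ℕ),
      CGAux.alpha M (hTOK f) (g0 ^ n * M.simple ξ)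
        = CGAux.Pf M τ ξ d f n * M.simple (if n ∈ f then τ ξ else ξ) := by
    intro f n
    rw [CGAux.alpha_mul_simple, halpha_pow f n, htwl_ξ f n]
  -- distinctness of the twisted automorphisms
  have hdist : ∀ f f' : Set ℕ, f ≠ f' →
      ∃ z, CGAux.alpha M (hTOK f) z ≠ CGAux.alpha M (hTOK f') z := by
    intro f f' hneff
    have hex : ∃ n, ¬(n ∈ f ↔ n ∈ f') := by
      by_contra hcon
      push_neg at hcon
      exact hneff (Set.ext fun n => hcon n)
    have hmin : ∀ j, j < Nat.find hex → (j ∈ f ↔ j ∈ f') :=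
      fun j hj => not_not.mp (Nat.find_min hex hj)
    have hdiff := Nat.find_spec hex
    set n₀ := Nat.find hex
    refine ⟨g0 ^ n₀ * M.simple ξ, ?_⟩
    rw [halpha_pow' f n₀, halpha_pow' f' n₀,
      CGAux.Pf_congr M τ ξ d f f' n₀ hmin]
    intro heq
    have hss := mul_left_cancel heq
    by_cases h0 : n₀ ∈ f <;> by_cases h0' : n₀ ∈ f'
    · exact hdiff (iff_of_true h0 h0')
    · rw [if_pos h0, if_neg h0'] at hss
      exact CGAux.simple_injective M hτξne hss
    · rw [if_neg h0, if_pos h0'] at hss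
      exact CGAux.simple_injective M hτξne hss.symm
    · exact hdiff (iff_of_false h0 h0')
  -- final assembly
  intro hcount
  have hLmem : Equiv.mulLeft w ∈ graphAut (cayley M) := by
    rw [CGAux.mem_graphAut]
    intro x y
    rw [CGAux.cayley_adj, CGAux.cayley_adj, Equiv.coe_mulLeft]
    constructor
    · rintro ⟨hne, z, hz⟩
      rw [mul_assoc] at hz
      exact ⟨fun h => hne (by rw [h]), z, mul_left_cancel hz⟩
    · rintro ⟨hne, z, rfl⟩
      exact ⟨fun h => hne (mul_left_cancel h), z, by rw [mul_assoc]⟩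
  set L : ↥(graphAut (cayley M)) := ⟨Equiv.mulLeft w, hLmem⟩ with hLdef
  have hAmem : ∀ f : Set ℕ, CGAux.alphaE M (hTOK f) ∈ graphAut (cayley M) :=
    fun f => CGAux.alphaE_mem_graphAut M (hTOK f)
  set Aut : Set ℕ → ↥(graphAut (cayley M)) :=
    fun f => L * ⟨CGAux.alphaE M (hTOK f), hAmem f⟩ * L⁻¹ with hAutdef
  have hfix : ∀ f : Set ℕ, Aut f ∈ MulAction.stabilizer ↥(graphAut (cayley M)) w := by
    intro f
    rw [MulAction.mem_stabilizer_iff]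
    show ((Aut f : Equiv.Perm M.Group)) w = w
    have hcoe : (Aut f : Equiv.Perm M.Group)
        = Equiv.mulLeft w * CGAux.alphaE M (hTOK f) * (Equiv.mulLeft w)⁻¹ := rfl
    rw [hcoe, Equiv.Perm.mul_apply, Equiv.Perm.mul_apply]
    have h1 : ((Equiv.mulLeft w)⁻¹ : Equiv.Perm M.Group) w = 1 := by
      show ((Equiv.mulLeft w).symm) w = 1
      rw [Equiv.mulLeft_symm]
      exact inv_mul_cancel w
    rw [h1]
    have h2 : CGAux.alphaE M (hTOK f) 1 = 1 := by
      rw [CGAux.alphaE_apply, CGAux.alpha_one]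
    rw [h2]
    exact mul_one w
  set Φ : Set ℕ → ↥(MulAction.stabilizer ↥(graphAut (cayley M)) w) :=
    fun f => ⟨Aut f, hfix f⟩ with hΦdef
  have hΦinj : Function.Injective Φ := by
    intro f f' hff
    by_contra hneff
    obtain ⟨z, hz⟩ := hdist f f' hneff
    apply hz
    have h1 : Aut f = Aut f' := Subtype.ext_iff.mp hff
    have h2 : (⟨CGAux.alphaE M (hTOK f), hAmem f⟩ : ↥(graphAut (cayley M)))
        = ⟨CGAux.alphaE M (hTOK f'), hAmem f'⟩ := by
      have := mul_right_cancel h1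
      exact mul_left_cancel this
    have h3 : CGAux.alphaE M (hTOK f) = CGAux.alphaE M (hTOK f') :=
      Subtype.ext_iff.mp h2
    rw [← CGAux.alphaE_apply, h3, CGAux.alphaE_apply]
  have hcnt2 : Countable (Set ℕ) := hΦinj.countable
  obtain ⟨e, he⟩ := Countable.exists_injective_nat (Set ℕ)
  exact Function.cantor_injective e he
end

section
/- Let Γ be a weighted graph. The map α ↦ (α(e), v ↦ σ(α,v)) is a bijection between the automorphism group A_Γ of the Cayley graph C_Γ and the set W_Γ × Σ_Γ; consequently the stabiliser of the identity vertex e in A_Γ is in bijection with the set Σ_Γ of legal configurations of local actions. -/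
/-!
Setup for Cayley graphs of Coxeter groups.

A weighted graph `Γ = (VΓ, EΓ, m)` in the sense of the paper is encoded by a Mathlib
`CoxeterMatrix B` (`B = VΓ`): the weight `m x y` is `M x y`, where the entry `0` encodes `∞`
(no relation / no edge).  The associated Coxeter group is `M.Group`, with standard generators
`M.simple x`.
-/

open CoxeterMatrix

variable {B : Type*}

-- For STATEMENT 15
open Classical in
/-- The local action `σ(α, v)` of `α` at `v`, as a function `VΓ → VΓ`: `localAct M α v x` is
the label of the edge `{α v, α (v * M.simple x)}`. -/
noncomputable def localAct {B : Type*} (M : CoxeterMatrix B) (α : Equiv.Perm M.Group)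
    (v : M.Group) (x : B) : B :=
  if h : ∃ y : B, α (v * M.simple x) = α v * M.simple y then h.choose else x

/-- Legal configurations of local actions, as plain functions `W_Γ → (VΓ → VΓ)`. -/
def legalFunConfigs {B : Type*} (M : CoxeterMatrix B) : Set (M.Group → B → B) :=
  {σb | ∃ α ∈ graphAut (cayley M), ∀ v : M.Group, IsLocalAction M α v (σb v)}

open Polynomial Complex
open scoped Matrix

namespace CoxAux

variable {B : Type*}

/-- The key 2x2 matrix lemma. -/
lemma key_matrix (m : ℕ) (hm : 2 ≤ m) (c : ℂ)
    (hc : c ^ 2 = Complex.exp (2 * Real.pi * I / m) + (Complex.exp (2 * Real.pi * I / m))⁻¹ + 2) :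
    (!![c ^ 2 - 1, c; -c, -1] : Matrix (Fin 2) (Fin 2) ℂ) ^ m = 1 ∧
      ∑ k ∈ Finset.range m, (!![c ^ 2 - 1, c; -c, -1] : Matrix (Fin 2) (Fin 2) ℂ) ^ k = 0 := by
  set ω : ℂ := Complex.exp (2 * Real.pi * I / m) with hωdef
  have hm0 : (m : ℂ) ≠ 0 := Nat.cast_ne_zero.mpr (by omega)
  have hω0 : ω ≠ 0 := Complex.exp_ne_zero _
  have hinv : ω * ω⁻¹ = 1 := mul_inv_cancel₀ hω0
  have hπ : (2 * (Real.pi : ℂ) * I) ≠ 0 := by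
    simp [Real.pi_ne_zero, Complex.I_ne_zero]
  have hωm : ω ^ m = 1 := by
    rw [hωdef, ← Complex.exp_nat_mul]
    rw [show (m : ℂ) * (2 * Real.pi * I / m) = 2 * Real.pi * I by field_simp]
    exact Complex.exp_two_pi_mul_I
  have hpow_ne : ∀ k : ℕ, 0 < k → k < m → ω ^ k ≠ 1 := by
    intro k hk hkm h
    rw [hωdef, ← Complex.exp_nat_mul, Complex.exp_eq_one_iff] at h
    obtain ⟨n, hn⟩ := h
    have h1 : (k : ℂ) * (2 * Real.pi * I) = ((n * m : ℤ) : ℂ) * (2 * Real.pi * I) := by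
      push_cast
      field_simp at hn
      linear_combination (2 * (Real.pi : ℂ) * I) * hn
    have h2 : (k : ℤ) = n * m := by exact_mod_cast mul_right_cancel₀ hπ h1
    have h3 : (m : ℤ) ∣ (k : ℤ) := ⟨n, by rw [h2]; ring⟩
    have h4 : (m : ℤ) ≤ (k : ℤ) := Int.le_of_dvd (by exact_mod_cast hk) h3
    omega
  have hω1 : ω ≠ 1 := by simpa using hpow_ne 1 one_pos (by omega)
  rcases eq_or_lt_of_le hm with h2 | h3
  · -- m = 2
    obtain rfl : m = 2 := h2.symm
    have hωneg : ω = -1 := by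
      rw [hωdef, show (2 * (Real.pi:ℂ) * I / ((2:ℕ):ℂ)) = Real.pi * I by push_cast; ring]
      exact Complex.exp_pi_mul_I
    have hc0 : c = 0 := by
      have : c ^ 2 = 0 := by rw [hc, hωneg]; norm_num
      exact pow_eq_zero_iff (n := 2) (by norm_num) |>.mp this
    have hT : (!![c ^ 2 - 1, c; -c, -1] : Matrix (Fin 2) (Fin 2) ℂ) = -1 := by
      subst hc0
      ext i j
      fin_cases i <;> fin_cases j <;> simp [Matrix.one_apply]
    rw [hT]
    constructor
    · rw [show (2:ℕ) = 2 from rfl]; simp [pow_two]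
    · rw [Finset.sum_range_succ, Finset.sum_range_one]
      simp
  · -- m ≥ 3
    have hne : ω ≠ ω⁻¹ := by
      intro h
      apply hpow_ne 2 two_pos h3
      rw [sq]
      nth_rewrite 2 [h]
      exact hinv
    set T : Matrix (Fin 2) (Fin 2) ℂ := !![c ^ 2 - 1, c; -c, -1] with hTdef
    have hq : (T - ω • 1) * (T - ω⁻¹ • 1) = 0 := by
      ext i j
      fin_cases i <;> fin_cases j <;>
        simp [hTdef, Matrix.mul_apply, Fin.sum_univ_two, Matrix.one_apply] <;>
        ring_nf
      · linear_combination (c ^ 2 - 1) * hc + hinv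
      · linear_combination c * hc
      · linear_combination (-c) * hc
      · linear_combination (-1 : ℂ) * hc + hinv
    have haeval : ∀ p : ℂ[X], (X - C ω) * (X - C ω⁻¹) ∣ p → (Polynomial.aeval T) p = 0 := by
      rintro p ⟨r, rfl⟩
      rw [map_mul, map_mul, map_sub, map_sub, aeval_X, aeval_C, aeval_C,
        Algebra.algebraMap_eq_smul_one, Algebra.algebraMap_eq_smul_one, hq, zero_mul]
    have hcop : IsCoprime (X - C ω) (X - C ω⁻¹) :=
      Polynomial.isCoprime_X_sub_C_of_isUnit_sub (isUnit_iff_ne_zero.mpr (sub_ne_zero_of_ne hne))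
    have hd1 : (X - C ω) * (X - C ω⁻¹) ∣ (X ^ m - 1 : ℂ[X]) := by
      apply hcop.mul_dvd <;> rw [dvd_iff_isRoot] <;>
        simp [IsRoot, hωm, inv_pow]
    have hd2 : (X - C ω) * (X - C ω⁻¹) ∣ (∑ k ∈ Finset.range m, (X : ℂ[X]) ^ k) := by
      apply hcop.mul_dvd <;> rw [dvd_iff_isRoot, IsRoot, eval_finset_sum]
      · simp only [eval_pow, eval_X]
        rw [geom_sum_eq hω1, hωm, sub_self, zero_div]
      · simp only [eval_pow, eval_X]
        have hω1' : ω⁻¹ ≠ 1 := by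
          intro h; exact hω1 (by rwa [inv_eq_one] at h)
        rw [geom_sum_eq hω1', inv_pow, hωm, inv_one, sub_self, zero_div]
    constructor
    · have h := haeval _ hd1
      rw [map_sub, map_pow, aeval_X, map_one, sub_eq_zero] at h
      exact h
    · have h := haeval _ hd2
      rw [map_sum] at h
      simpa only [map_pow, aeval_X] using h


noncomputable def zC (m : ℕ) : ℂ := Complex.exp (Real.pi * I / m)

/-- The coefficients of the complex reflection representation. -/
noncomputable def coeffA (M : CoxeterMatrix B) (x y : B) : ℂ :=
  if M x y = 0 then 0 else -(zC (M x y) + (zC (M x y))⁻¹)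

lemma coeffA_symm (M : CoxeterMatrix B) (x y : B) : coeffA M x y = coeffA M y x := by
  rw [coeffA, coeffA, M.symmetric x y]

lemma coeffA_diag (M : CoxeterMatrix B) (x : B) : coeffA M x x = 2 := by
  rw [coeffA, M.diagonal x]
  have h1 : zC 1 = -1 := by
    rw [zC]
    push_cast
    rw [div_one]
    exact Complex.exp_pi_mul_I
  norm_num [h1]

/-- Basis vectors. -/
noncomputable def eps (z : B) : B →₀ ℂ := Finsupp.single z 1

/-- The reflection associated to a vertex, acting on `B →₀ ℂ`. -/
noncomputable def refl (M : CoxeterMatrix B) (x : B) : Module.End ℂ (B →₀ ℂ) :=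
  LinearMap.id - (Finsupp.lsingle x).comp (Finsupp.linearCombination ℂ (coeffA M x))

lemma refl_eps (M : CoxeterMatrix B) (x z : B) :
    refl M x (eps z) = eps z - coeffA M x z • eps x := by
  simp [refl, eps, Finsupp.linearCombination_single, Finsupp.smul_single, smul_eq_mul]

lemma single_eq_smul_eps (z : B) (t : ℂ) : (Finsupp.single z t : B →₀ ℂ) = t • eps z := by
  simp [eps, Finsupp.smul_single]

lemma pair_pow (M : CoxeterMatrix B) {x y : B} (hxy : x ≠ y) (h0 : M x y ≠ 0) :
    (refl M x * refl M y) ^ (M x y) = 1 := by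
  set m : ℕ := M x y with hmdef
  have hm : 2 ≤ m := by
    have := M.off_diagonal x y hxy
    omega
  set c : ℂ := coeffA M x y with hcdef
  have hζ : zC m ≠ 0 := Complex.exp_ne_zero _
  have hsq : zC m ^ 2 = Complex.exp (2 * Real.pi * I / m) := by
    rw [zC, sq, ← Complex.exp_add]
    congr 1
    ring
  have hc : c ^ 2 = Complex.exp (2 * Real.pi * I / m) + (Complex.exp (2 * Real.pi * I / m))⁻¹ + 2 := by
    rw [← hsq, hcdef, coeffA, if_neg h0, ← hmdef]
    field_simp
    ring
  obtain ⟨hpow, hsum⟩ := key_matrix m hm c hc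
  set T : Module.End ℂ (B →₀ ℂ) := refl M x * refl M y with hTdef
  have hcyx : coeffA M y x = c := (coeffA_symm M y x).trans rfl
  have hTx : T (eps x) = (c ^ 2 - 1) • eps x + (-c) • eps y := by
    rw [hTdef, Module.End.mul_apply,
      refl_eps, map_sub, map_smul, refl_eps, refl_eps, coeffA_diag, hcyx, ← hcdef]
    module
  have hTy : T (eps y) = c • eps x + (-1 : ℂ) • eps y := by
    rw [hTdef, Module.End.mul_apply,
      refl_eps, map_sub, map_smul, refl_eps, coeffA_diag, ← hcdef]
    module
  have hTz : ∀ z : B, z ≠ x → z ≠ y →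
      T (eps z) = eps z + (c * coeffA M y z - coeffA M x z) • eps x
        + (-(coeffA M y z)) • eps y := by
    intro z hzx hzy
    rw [hTdef, Module.End.mul_apply,
      refl_eps, map_sub, map_smul, refl_eps, refl_eps, ← hcdef]
    module
  have hstep : ∀ p q : ℂ, T (p • eps x + q • eps y) =
      ((c ^ 2 - 1) * p + c * q) • eps x + (-(c * p) - q) • eps y := by
    intro p q
    rw [map_add, map_smul, map_smul, hTx, hTy]
    module
  set T₂ : Matrix (Fin 2) (Fin 2) ℂ := !![c ^ 2 - 1, c; -c, -1] with hT₂def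
  have hT2mul : ∀ w : Fin 2 → ℂ,
      T₂ *ᵥ w = ![(c ^ 2 - 1) * w 0 + c * w 1, -(c * w 0) - w 1] := by
    intro w
    funext i
    fin_cases i <;>
      simp [hT₂def, Matrix.mulVec, dotProduct, Fin.sum_univ_two] <;> ring
  have claim1 : ∀ (n : ℕ) (w : Fin 2 → ℂ),
      (T ^ n) (w 0 • eps x + w 1 • eps y) =
        (T₂ ^ n *ᵥ w) 0 • eps x + (T₂ ^ n *ᵥ w) 1 • eps y := by
    intro n
    induction n with
    | zero =>
      intro w
      simp [Matrix.one_mulVec]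
    | succ n ih =>
      intro w
      rw [pow_succ', Module.End.mul_apply, ih w, hstep]
      have hv : T₂ ^ (n + 1) *ᵥ w = T₂ *ᵥ (T₂ ^ n *ᵥ w) := by
        rw [Matrix.mulVec_mulVec, ← pow_succ']
      rw [hv, hT2mul]
      simp
  have claim2 : ∀ (z : B), z ≠ x → z ≠ y → ∀ n : ℕ,
      (T ^ n) (eps z) = eps z +
        ((∑ k ∈ Finset.range n, T₂ ^ k) *ᵥ
            ![c * coeffA M y z - coeffA M x z, -(coeffA M y z)]) 0 • eps x +
        ((∑ k ∈ Finset.range n, T₂ ^ k) *ᵥ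
            ![c * coeffA M y z - coeffA M x z, -(coeffA M y z)]) 1 • eps y := by
    intro z hzx hzy n
    induction n with
    | zero =>
      simp [Matrix.zero_mulVec]
    | succ n ih =>
      rw [pow_succ', Module.End.mul_apply, ih]
      rw [map_add, map_add, map_smul, map_smul, hTz z hzx hzy, hTx, hTy]
      have hv : (∑ k ∈ Finset.range (n + 1), T₂ ^ k) *ᵥ
            ![c * coeffA M y z - coeffA M x z, -(coeffA M y z)] =
          T₂ *ᵥ ((∑ k ∈ Finset.range n, T₂ ^ k) *ᵥ
            ![c * coeffA M y z - coeffA M x z, -(coeffA M y z)])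
            + ![c * coeffA M y z - coeffA M x z, -(coeffA M y z)] := by
        rw [geom_sum_succ, Matrix.add_mulVec, Matrix.one_mulVec, Matrix.mulVec_mulVec]
      rw [hv, hT2mul]
      simp only [Matrix.cons_val_zero, Matrix.cons_val_one, Matrix.head_cons, Pi.add_apply]
      module
  -- conclude
  apply Finsupp.lhom_ext
  intro z t
  rw [show (Finsupp.single z t : B →₀ ℂ) = t • eps z from single_eq_smul_eps z t,
    map_smul, map_smul]
  suffices h : (T ^ m) (eps z) = eps z by
    rw [h]
    simp
  by_cases hzx : z = x
  · subst hzx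
    have h1 := claim1 m ![1, 0]
    simp only [Matrix.cons_val_zero, Matrix.cons_val_one, Matrix.head_cons, hpow,
      Matrix.one_mulVec] at h1
    simpa using h1
  · by_cases hzy : z = y
    · subst hzy
      have h1 := claim1 m ![0, 1]
      simp only [Matrix.cons_val_zero, Matrix.cons_val_one, Matrix.head_cons, hpow,
        Matrix.one_mulVec] at h1
      simpa using h1
    · have h1 := claim2 z hzx hzy m
      rw [hsum, Matrix.zero_mulVec] at h1
      simpa using h1

lemma liftable (M : CoxeterMatrix B) : CoxeterMatrix.IsLiftable M (fun x => refl M x) := by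
  intro x y
  by_cases hxy : x = y
  · subst hxy
    rw [M.diagonal, pow_one]
    apply Finsupp.lhom_ext
    intro z t
    rw [show (Finsupp.single z t : B →₀ ℂ) = t • eps z from single_eq_smul_eps z t,
      map_smul, map_smul]
    rw [Module.End.one_apply, Module.End.mul_apply, refl_eps, map_sub, map_smul, refl_eps, refl_eps, coeffA_diag]
    module
  · by_cases h0 : M x y = 0
    · rw [h0, pow_zero]
    · exact pair_pow M hxy h0

theorem simple_injective (M : CoxeterMatrix B) : Function.Injective M.simple := by
  intro i j hij
  by_contra hne
  have h : refl M i = refl M j := by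
    have h1 := M.toCoxeterSystem.lift_apply_simple (liftable M) i
    have h2 := M.toCoxeterSystem.lift_apply_simple (liftable M) j
    rw [M.toCoxeterSystem_simple] at h1 h2
    rw [← h1, ← h2, hij]
  have h3 : refl M i (eps i) = refl M j (eps i) := by rw [h]
  rw [refl_eps, refl_eps, coeffA_diag] at h3
  have h4 := congrArg (fun f : B →₀ ℂ => f i) h3
  simp only [eps, Finsupp.sub_apply, Finsupp.smul_apply, Finsupp.single_apply, if_pos rfl,
    if_neg (Ne.symm hne), smul_eq_mul, mul_zero, sub_zero, mul_one,
    Finsupp.single_eq_of_ne' (fun hh => hne hh.symm)] at h4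
  norm_num at h4

end CoxAux

section GraphLemmas

variable {B : Type*} (M : CoxeterMatrix B)

lemma simple_ne_one' (x : B) : M.simple x ≠ 1 := by
  intro h
  have h1 := M.toCoxeterSystem.length_simple x
  rw [M.toCoxeterSystem_simple, h, M.toCoxeterSystem.length_one] at h1
  exact one_ne_zero h1.symm

lemma cayley_adj_mul (v : M.Group) (x : B) : (cayley M).Adj v (v * M.simple x) :=
  ⟨fun h => simple_ne_one' M x (left_eq_mul.mp h), x, rfl⟩

lemma exists_local {α : Equiv.Perm M.Group} (hα : α ∈ graphAut (cayley M)) (v : M.Group)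
    (x : B) : ∃ y : B, α (v * M.simple x) = α v * M.simple y :=
  ((hα v (v * M.simple x)).mpr (cayley_adj_mul M v x)).2

lemma isLocalAction_localAct {α : Equiv.Perm M.Group} (hα : α ∈ graphAut (cayley M))
    (v : M.Group) : IsLocalAction M α v (localAct M α v) := by
  intro x
  rw [localAct, dif_pos (exists_local M hα v x)]
  exact (exists_local M hα v x).choose_spec

lemma localAct_eq {α : Equiv.Perm M.Group} (hα : α ∈ graphAut (cayley M)) {v : M.Group}
    {τ : B → B} (hτ : IsLocalAction M α v τ) : localAct M α v = τ := by
  funext x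
  exact CoxAux.simple_injective M
    (mul_left_cancel ((isLocalAction_localAct M hα v x).symm.trans (hτ x)))

lemma graphAut_eq_of {α β : Equiv.Perm M.Group} (hα : α ∈ graphAut (cayley M))
    (hβ : β ∈ graphAut (cayley M)) (h1 : α 1 = β 1)
    (h2 : ∀ v, localAct M α v = localAct M β v) : α = β := by
  apply Equiv.ext
  intro v
  refine M.toCoxeterSystem.simple_induction_right (p := fun v => α v = β v) v h1 ?_
  intro w i hw
  have ha := isLocalAction_localAct M hα w i
  have hb := isLocalAction_localAct M hβ w i
  show α (w * M.toCoxeterSystem.simple i) = β (w * M.toCoxeterSystem.simple i)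
  rw [M.toCoxeterSystem_simple, ha, hb, hw, h2 w]

lemma mulLeft_mem (g : M.Group) : Equiv.mulLeft g ∈ graphAut (cayley M) := by
  intro v w
  show (cayley M).Adj (g * v) (g * w) ↔ (cayley M).Adj v w
  constructor
  · rintro ⟨h1, x, hx⟩
    refine ⟨fun hh => h1 (by rw [hh]), x, ?_⟩
    rw [mul_assoc] at hx
    exact mul_left_cancel hx
  · rintro ⟨h1, x, hx⟩
    refine ⟨fun hh => h1 (mul_left_cancel hh), x, ?_⟩
    rw [hx, mul_assoc]

lemma exists_graphAut (w : M.Group) {σb : M.Group → B → B} (hσ : σb ∈ legalFunConfigs M) :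
    ∃ β : Equiv.Perm M.Group, β ∈ graphAut (cayley M) ∧ β 1 = w ∧
      (fun v => localAct M β v) = σb := by
  obtain ⟨α, hα, hact⟩ := hσ
  refine ⟨Equiv.mulLeft (w * (α 1)⁻¹) * α, mul_mem (mulLeft_mem M _) hα, ?_, ?_⟩
  · show w * (α 1)⁻¹ * α 1 = w
    exact inv_mul_cancel_right w (α 1)
  · funext v
    refine localAct_eq M (mul_mem (mulLeft_mem M _) hα) ?_
    intro x
    show w * (α 1)⁻¹ * α (v * M.simple x) = w * (α 1)⁻¹ * α v * M.simple (σb v x)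
    rw [hact v x]
    group

end GraphLemmas

-- STATEMENT 15
theorem aut_bijection_with_configs {B : Type*} (M : CoxeterMatrix B) :
    Function.Injective (fun α : ↥(graphAut (cayley M)) =>
      (((α : Equiv.Perm M.Group)) (1 : M.Group),
        fun v : M.Group => localAct M (α : Equiv.Perm M.Group) v)) ∧
    Set.range (fun α : ↥(graphAut (cayley M)) =>
      (((α : Equiv.Perm M.Group)) (1 : M.Group),
        fun v : M.Group => localAct M (α : Equiv.Perm M.Group) v)) =
      Set.univ ×ˢ legalFunConfigs M ∧
    Nonempty (↥(MulAction.stabilizer ↥(graphAut (cayley M)) (1 : M.Group)) ≃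
      ↥(legalFunConfigs M)) := by
  have hinj : Function.Injective (fun α : ↥(graphAut (cayley M)) =>
      (((α : Equiv.Perm M.Group)) (1 : M.Group),
        fun v : M.Group => localAct M (α : Equiv.Perm M.Group) v)) := by
    intro a b h
    rw [Prod.mk.injEq] at h
    exact Subtype.ext (graphAut_eq_of M a.2 b.2 h.1 (fun v => congrFun h.2 v))
  refine ⟨hinj, ?_, ?_⟩
  · ext ⟨w, σb⟩
    simp only [Set.mem_range, Set.mem_prod, Set.mem_univ, true_and]
    constructor
    · rintro ⟨a, ha⟩
      rw [Prod.mk.injEq] at ha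
      obtain ⟨h1, h2⟩ := ha
      rw [← h2]
      exact ⟨(a : Equiv.Perm M.Group), a.2, fun v => isLocalAction_localAct M a.2 v⟩
    · intro hσ
      obtain ⟨β, hβ, h1, h2⟩ := exists_graphAut M w hσ
      exact ⟨⟨β, hβ⟩, by rw [Prod.mk.injEq]; exact ⟨h1, h2⟩⟩
  · refine ⟨Equiv.ofBijective (fun a =>
      (⟨fun v => localAct M ((a : ↥(graphAut (cayley M))) : Equiv.Perm M.Group) v,
        ⟨((a : ↥(graphAut (cayley M))) : Equiv.Perm M.Group), (a : ↥(graphAut (cayley M))).2,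
          fun v => isLocalAction_localAct M (a : ↥(graphAut (cayley M))).2 v⟩⟩ :
        ↥(legalFunConfigs M))) ⟨?_, ?_⟩⟩
    · intro a b h
      have h' := congrArg Subtype.val h
      have h1a : ((a : ↥(graphAut (cayley M))) : Equiv.Perm M.Group) 1 = 1 := a.2
      have h1b : ((b : ↥(graphAut (cayley M))) : Equiv.Perm M.Group) 1 = 1 := b.2
      exact Subtype.ext (Subtype.ext (graphAut_eq_of M
        (a : ↥(graphAut (cayley M))).2 (b : ↥(graphAut (cayley M))).2
        (h1a.trans h1b.symm) (fun v => congrFun h' v)))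
    · rintro ⟨σb, hσ⟩
      obtain ⟨β, hβ, h1, h2⟩ := exists_graphAut M 1 hσ
      refine ⟨⟨⟨β, hβ⟩, ?_⟩, ?_⟩
      · show (⟨β, hβ⟩ : ↥(graphAut (cayley M))) • (1 : M.Group) = 1
        exact h1
      · exact Subtype.ext h2
end
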